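/- arXiv:1511.04553 — 4 statements merged into one kernel-verified Lean document; each statement's English description precedes it below -/
import Mathlib

section
/- For any real numbers x, x₀ > 0, any finite sequences of nonnegative reals y₁,…,y_m and z₁,…,z_m with z_i < x for all i, one has the lower bound ∏_{i=1}^m (1 - z_i/x)^{y_i} - exp(-(1/x₀)·∑_{i=1}^m y_i z_i) ≥ -(x₀/x²)·max(x₀ - x, 0) - (x₀/2)·max_{1≤i≤m} z_i/(x - z_i)². -/
open Real

lemma key_log (t : ℝ) (h0 : 0 ≤ t) (h1 : t < 1) :
    -t - t^2/(2*(1-t)) ≤ Real.log (1-t) := by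
  have h1t : 0 < 1 - t := by linarith
  -- g s = 2(1-s)log(1-s) + 2s - s^2 is monotone on [0,t]
  set g : ℝ → ℝ := fun s => 2*(1-s)*Real.log (1-s) + 2*s - s^2 with hg
  have hmono : MonotoneOn g (Set.Icc 0 t) := by
    apply monotoneOn_of_deriv_nonneg (convex_Icc 0 t)
    · apply ContinuousOn.sub
      apply ContinuousOn.add
      · exact (continuousOn_const.mul (continuousOn_const.sub continuousOn_id)).mul
          ((continuousOn_const.sub continuousOn_id).log (by
            intro s hs; simp only [Set.mem_Icc] at hs; intro h; simp only [Pi.sub_apply, id] at h; linarith [hs.2]))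
      · exact continuousOn_const.mul continuousOn_id
      · exact continuousOn_id.pow 2
    · intro s hs
      rw [interior_Icc] at hs
      have hs1 : (1:ℝ) - s ≠ 0 := by intro h; linarith [hs.2]
      have hd : HasDerivAt g (-2*Real.log (1-s) - 2*s) s := by
        have hlog : HasDerivAt (fun s : ℝ => Real.log (1-s)) ((-1)/(1-s)) s := by
          have := ((hasDerivAt_const s (1:ℝ)).sub (hasDerivAt_id s)).log hs1
          simpa using this
        have hc : HasDerivAt (fun s : ℝ => 2*(1-s)) (-2) s := by
          have := ((hasDerivAt_const s (1:ℝ)).sub (hasDerivAt_id s)).const_mul (2:ℝ)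
          simpa using this
        have hmul := hc.mul hlog
        have hlin : HasDerivAt (fun s : ℝ => 2*s) 2 s := by
          simpa using (hasDerivAt_id s).const_mul (2:ℝ)
        have hsq : HasDerivAt (fun s : ℝ => s^2) (2*s) s := by
          simpa using hasDerivAt_pow 2 s
        have := (hmul.add hlin).sub hsq
        refine this.congr_deriv ?_
        field_simp
        ring
      exact hd.differentiableAt.differentiableWithinAt
    · intro s hs
      rw [interior_Icc] at hs
      have hs1 : (1:ℝ) - s ≠ 0 := by intro h; linarith [hs.2]
      have hd : HasDerivAt g (-2*Real.log (1-s) - 2*s) s := by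
        have hlog : HasDerivAt (fun s : ℝ => Real.log (1-s)) ((-1)/(1-s)) s := by
          have := ((hasDerivAt_const s (1:ℝ)).sub (hasDerivAt_id s)).log hs1
          simpa using this
        have hc : HasDerivAt (fun s : ℝ => 2*(1-s)) (-2) s := by
          have := ((hasDerivAt_const s (1:ℝ)).sub (hasDerivAt_id s)).const_mul (2:ℝ)
          simpa using this
        have hmul := hc.mul hlog
        have hlin : HasDerivAt (fun s : ℝ => 2*s) 2 s := by
          simpa using (hasDerivAt_id s).const_mul (2:ℝ)
        have hsq : HasDerivAt (fun s : ℝ => s^2) (2*s) s := by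
          simpa using hasDerivAt_pow 2 s
        have := (hmul.add hlin).sub hsq
        refine this.congr_deriv ?_
        field_simp
        ring
      rw [hd.deriv]
      have : Real.log (1-s) ≤ -s := by
        have := Real.log_le_sub_one_of_pos (x := 1-s) (by linarith [hs.1, hs.2])
        linarith
      linarith
  have hgt : g 0 ≤ g t := hmono (Set.mem_Icc.2 ⟨le_refl 0, h0⟩) (Set.mem_Icc.2 ⟨h0, le_refl t⟩) h0
  have hg0 : g 0 = 0 := by simp [hg]
  have hgt' : 0 ≤ 2*(1-t)*Real.log (1-t) + 2*t - t^2 := by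
    have : g t = 2*(1-t)*Real.log (1-t) + 2*t - t^2 := rfl
    linarith [hg0 ▸ hgt, this ▸ hgt]
  have h2 : (0:ℝ) < 2*(1-t) := by linarith
  have hdiv : t^2/(2*(1-t)) * (2*(1-t)) = t^2 := div_mul_cancel₀ _ h2.ne'
  nlinarith [hgt', hdiv, h2]

set_option maxHeartbeats 1000000 in
theorem stmt_1 (m : ℕ) (hm : 0 < m) (x x₀ : ℝ) (hx : 0 < x) (hx₀ : 0 < x₀)
    (y z : Fin m → ℝ) (hy : ∀ i, 0 ≤ y i) (hz : ∀ i, 0 ≤ z i) (hzx : ∀ i, z i < x) :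
    -(x₀ / x ^ 2) * max (x₀ - x) 0
      - (x₀ / 2) * ((Finset.univ : Finset (Fin m)).sup' ⟨⟨0, hm⟩, Finset.mem_univ _⟩
          (fun i => z i / (x - z i) ^ 2))
      ≤ (∏ i, (1 - z i / x) ^ (y i)) - Real.exp (-(1 / x₀) * ∑ i, y i * z i) := by
  set M := (Finset.univ : Finset (Fin m)).sup' ⟨⟨0, hm⟩, Finset.mem_univ _⟩
      (fun i => z i / (x - z i) ^ 2) with hMdef
  have hMz : ∀ i, z i / (x - z i) ^ 2 ≤ M := by
    intro i
    rw [hMdef]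
    exact Finset.le_sup' (fun i => z i / (x - z i) ^ 2) (Finset.mem_univ i)
  have hM0 : 0 ≤ M := le_trans (div_nonneg (hz ⟨0, hm⟩) (sq_nonneg _)) (hMz ⟨0, hm⟩)
  clear_value M
  set S := ∑ i, y i * z i with hSdef
  have hS0 : 0 ≤ S := Finset.sum_nonneg fun i _ => mul_nonneg (hy i) (hz i)
  set A := ∑ i, Real.log (1 - z i / x) * y i with hAdef
  set B := -(1 / x₀) * S with hBdef
  clear_value B
  have hpos : ∀ i, 0 < 1 - z i / x := by
    intro i
    have : z i / x < 1 := (div_lt_one hx).2 (hzx i)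
    linarith
  have hprod : (∏ i, (1 - z i / x) ^ (y i)) = Real.exp A := by
    rw [hAdef, Real.exp_sum]
    exact Finset.prod_congr rfl fun i _ => Real.rpow_def_of_pos (hpos i) (y i)
  -- per-term lower bound on the log
  have hterm : ∀ i ∈ (Finset.univ : Finset (Fin m)),
      -(1/x + M/2) * (y i * z i) ≤ Real.log (1 - z i / x) * y i := by
    intro i _
    have hw : 0 < x - z i := by linarith [hzx i]
    have hkey := key_log (z i / x) (div_nonneg (hz i) hx.le) ((div_lt_one hx).2 (hzx i))
    have h2 : (z i / x)^2 / (2*(1 - z i / x)) = z i ^2 / (2 * x * (x - z i)) := by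
      have heq : (1:ℝ) - z i / x = (x - z i)/x := by field_simp
      rw [heq]
      field_simp
    rw [h2] at hkey
    have hstep : z i ^2 / (2 * x * (x - z i)) ≤ M/2 * z i := by
      have h1 : z i ^2 / (2 * x * (x - z i)) ≤ z i / (x - z i)^2 / 2 * z i := by
        rw [div_div, div_mul_eq_mul_div, div_le_div_iff₀ (by positivity) (by positivity)]
        nlinarith [mul_nonneg (mul_nonneg (sq_nonneg (z i)) hw.le) (hz i)]
      refine h1.trans (mul_le_mul_of_nonneg_right ?_ (hz i))
      linarith [hMz i]
    have hlog : -(1/x + M/2) * z i ≤ Real.log (1 - z i / x) := by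
      have egoal : -(1/x + M/2) * (z i) = -(z i / x) - M/2 * z i := by ring
      rw [egoal]
      linarith [hkey, hstep]
    have h3 := mul_le_mul_of_nonneg_right hlog (hy i)
    have e2 : -(1/x + M/2) * (y i * z i) = -(1/x + M/2) * z i * y i := by ring
    rw [e2]
    exact h3
  have hA : -(1/x + M/2) * S ≤ A := by
    rw [hSdef, hAdef, Finset.mul_sum]
    exact Finset.sum_le_sum hterm
  clear_value S A
  -- exp A - exp B ≥ exp B * (A - B)
  have hAB : Real.exp B * (A - B) ≤ Real.exp A - Real.exp B := by
    have h := Real.add_one_le_exp (A - B)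
    have h2 := mul_le_mul_of_nonneg_left h (Real.exp_pos B).le
    rw [← Real.exp_add] at h2
    have e1 : B + (A - B) = A := by ring
    rw [e1] at h2
    nlinarith [h2]
  set p := max (x₀ - x) 0 with hpdef
  have hp0 : 0 ≤ p := le_max_right _ _
  have hpx : 0 ≤ p * (x₀ - x) := by
    rcases max_cases (x₀ - x) 0 with ⟨h1, h2⟩ | ⟨h1, h2⟩ <;> rw [hpdef, h1] <;> nlinarith
  clear_value p
  set c := p/(x*x₀) + M/2 with hcdef
  clear_value c
  have hc0 : 0 ≤ c := by
    have : 0 ≤ p/(x*x₀) := div_nonneg hp0 (by positivity)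
    rw [hcdef]; linarith
  -- A - B ≥ -c * S
  have hABlow : -c * S ≤ A - B := by
    have h1 : 1/x - 1/x₀ ≤ p/(x*x₀) := by
      rw [div_sub_div _ _ hx.ne' hx₀.ne']
      apply div_le_div_of_nonneg_right ?_ (by positivity)
      · have e : (1*x₀ - x*1 : ℝ) = x₀ - x := by ring
        rw [e, hpdef]
        exact le_max_left _ _
    have h2 : (1/x - 1/x₀) * S ≤ p/(x*x₀) * S := mul_le_mul_of_nonneg_right h1 hS0
    have h3 : A - B = A + (1/x₀) * S := by rw [hBdef]; ring
    rw [h3, hcdef]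
    nlinarith [hA, h2]
  -- S * exp B ≤ x₀
  have hSexp : S * Real.exp B ≤ x₀ := by
    have eB : B = -(S/x₀) := by rw [hBdef]; ring
    have hu : S/x₀ ≤ Real.exp (S/x₀) := by linarith [Real.add_one_le_exp (S/x₀)]
    have hS' : S ≤ Real.exp (S/x₀) * x₀ := (div_le_iff₀ hx₀).1 hu
    rw [eB, Real.exp_neg]
    calc S * (Real.exp (S/x₀))⁻¹ ≤ (Real.exp (S/x₀) * x₀) * (Real.exp (S/x₀))⁻¹ :=
          mul_le_mul_of_nonneg_right hS' (by positivity)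
      _ = x₀ := by field_simp
  -- chain
  have hchain : -c * x₀ ≤ Real.exp A - Real.exp B := by
    have h1 : Real.exp B * (-c * S) ≤ Real.exp B * (A - B) :=
      mul_le_mul_of_nonneg_left hABlow (Real.exp_pos B).le
    have e2 : Real.exp B * (-c * S) = -c * (S * Real.exp B) := by ring
    have h3 : c * (S * Real.exp B) ≤ c * x₀ := mul_le_mul_of_nonneg_left hSexp hc0
    nlinarith [h1, hAB, h3, e2]
  rw [hprod]
  refine le_trans ?_ hchain
  have e3 : c * x₀ = p/x + x₀/2 * M := by rw [hcdef]; field_simp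
  have e4 : x₀/x^2 * p - p/x = (p*(x₀ - x))/x^2 := by field_simp
  have h4 : 0 ≤ (p*(x₀ - x))/x^2 := div_nonneg hpx (sq_nonneg x)
  nlinarith [e3, e4, h4]
end

section
/- Let F and G be cumulative distribution functions on ℝ of probability measures with finite first moments, and let U be a random variable uniformly distributed on (0,1). Then the pair (F⁻¹(U), G⁻¹(U)), where F⁻¹(u) = inf{x ∈ ℝ : F(x) ≥ u} is the generalized inverse, is a coupling achieving the Kantorovich–Rubinstein distance: E|F⁻¹(U) - G⁻¹(U)| = ∫₀¹ |F⁻¹(u) - G⁻¹(u)| du = ∫_{-∞}^{∞} |F(x) - G(x)| dx = d₁(F, G). -/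
open MeasureTheory Set Filter

/-- The Kantorovich–Rubinstein (Wasserstein-1) distance between two probability
measures on ℝ, defined as the infimum over couplings of the expected absolute
difference. -/
noncomputable def wasserstein1 (μ ν : Measure ℝ) : ℝ :=
  sInf {c : ℝ | ∃ π : Measure (ℝ × ℝ), IsProbabilityMeasure π ∧
    π.map Prod.fst = μ ∧ π.map Prod.snd = ν ∧ c = ∫ p, |p.1 - p.2| ∂π}

/-- The cumulative distribution function of a measure on ℝ. -/
noncomputable def cdfOf (μ : Measure ℝ) : ℝ → ℝ := fun x => (μ (Set.Iic x)).toReal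

/-- The generalized inverse (quantile function) of a cdf. -/
noncomputable def quantile (F : ℝ → ℝ) (u : ℝ) : ℝ := sInf {x : ℝ | u ≤ F x}


lemma xor_le_right (a b t : ℝ) : ((a ≤ t) ≠ (b ≤ t)) ↔ t ∈ Ico (min a b) (max a b) := by
  rcases le_total a b with h | h <;>
    simp only [min_eq_left, max_eq_right, min_eq_right, max_eq_left, h, mem_Ico] <;>
    by_cases h1 : a ≤ t <;> by_cases h2 : b ≤ t <;>
    simp [h1, h2] <;> first | tauto | linarith

lemma xor_le_left (a b u : ℝ) : ((u ≤ a) ≠ (u ≤ b)) ↔ u ∈ Ioc (min a b) (max a b) := by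
  rcases le_total a b with h | h <;>
    simp only [min_eq_left, max_eq_right, min_eq_right, max_eq_left, h, mem_Ioc] <;>
    by_cases h1 : u ≤ a <;> by_cases h2 : u ≤ b <;>
    simp [h1, h2] <;> first | tauto | linarith

lemma vol_sandwich {m M : ℝ} (S : Set ℝ) (h1 : Ioo m M ⊆ S) (h2 : S ⊆ Ioc m M) :
    volume S = ENNReal.ofReal (M - m) := by
  apply le_antisymm
  · calc volume S ≤ volume (Ioc m M) := measure_mono h2
      _ = ENNReal.ofReal (M - m) := Real.volume_Ioc
  · calc ENNReal.ofReal (M - m) = volume (Ioo m M) := Real.volume_Ioo.symm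
      _ ≤ volume S := measure_mono h1

section Galois
variable (μ : Measure ℝ) [IsProbabilityMeasure μ]

lemma cdfOf_eq : cdfOf μ = ⇑(ProbabilityTheory.cdf μ) := by
  ext x; rw [ProbabilityTheory.cdf_eq_real]; rfl

lemma cdfOf_mono : Monotone (cdfOf μ) := by
  rw [cdfOf_eq]; exact ProbabilityTheory.monotone_cdf μ

lemma cdfOf_nonneg (x : ℝ) : 0 ≤ cdfOf μ x := ENNReal.toReal_nonneg

lemma cdfOf_le_one (x : ℝ) : cdfOf μ x ≤ 1 := by
  rw [cdfOf_eq]; exact ProbabilityTheory.cdf_le_one μ x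

/-- The Galois property: for `u ∈ (0,1)`, `quantile F u ≤ x ↔ u ≤ F x`. -/
lemma quantile_le_iff {u : ℝ} (hu0 : 0 < u) (hu1 : u < 1) (x : ℝ) :
    quantile (cdfOf μ) u ≤ x ↔ u ≤ cdfOf μ x := by
  set F := cdfOf μ with hF
  have hmono : Monotone F := cdfOf_mono μ
  -- the set is nonempty
  have hne : {y : ℝ | u ≤ F y}.Nonempty := by
    have : Tendsto F atTop (nhds 1) := by
      rw [hF, cdfOf_eq]; exact ProbabilityTheory.tendsto_cdf_atTop μ
    have h2 : ∀ᶠ y in atTop, u < F y := this.eventually (eventually_gt_nhds hu1)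
    obtain ⟨y, hy⟩ := h2.exists
    exact ⟨y, hy.le⟩
  -- the set is bounded below
  have hbdd : BddBelow {y : ℝ | u ≤ F y} := by
    have : Tendsto F atBot (nhds 0) := by
      rw [hF, cdfOf_eq]; exact ProbabilityTheory.tendsto_cdf_atBot μ
    have h2 : ∀ᶠ y in atBot, F y < u := this.eventually (eventually_lt_nhds hu0)
    obtain ⟨z, hz⟩ := h2.exists
    refine ⟨z, fun y hy => ?_⟩
    by_contra hyz
    push_neg at hyz
    exact absurd (le_trans hy (hmono hyz.le)) (not_le.2 hz)
  constructor
  · intro hqx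
    -- u ≤ F (quantile F u) by right continuity
    have hq : u ≤ F (quantile F u) := by
      have hrc : ContinuousWithinAt F (Ici (quantile F u)) (quantile F u) := by
        rw [hF, cdfOf_eq]
        exact (ProbabilityTheory.cdf μ).right_continuous _
      have hrc' : Tendsto F (nhdsWithin (quantile F u) (Ioi (quantile F u)))
          (nhds (F (quantile F u))) :=
        hrc.tendsto.mono_left (nhdsWithin_mono _ Ioi_subset_Ici_self)
      refine ge_of_tendsto hrc' ?_
      filter_upwards [self_mem_nhdsWithin] with y hy
      obtain ⟨z, hz, hzy⟩ := (Real.lt_sInf_add_pos hne (by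
        simp only [mem_Ioi] at hy; linarith : (0:ℝ) < y - quantile F u)).imp
        (fun z hz => hz)
      · have : z ≤ y := by
          have : z < quantile F u + (y - quantile F u) := hzy
          linarith
        exact le_trans hz (hmono this)
    exact le_trans hq (hmono hqx)
  · intro hx
    exact csInf_le hbdd hx

end Galois

section Push
variable (μ : Measure ℝ) [IsProbabilityMeasure μ]

/-- Truncated quantile function: equal to `quantile (cdfOf μ)` on `(0,1)`, zero outside. -/
noncomputable def qt (μ : Measure ℝ) : ℝ → ℝ :=
  (Ioo (0:ℝ) 1).indicator (quantile (cdfOf μ))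

lemma qt_eq {u : ℝ} (hu : u ∈ Ioo (0:ℝ) 1) : qt μ u = quantile (cdfOf μ) u :=
  indicator_of_mem hu _

lemma qt_preimage (x : ℝ) :
    {u | u ∈ Ioo (0:ℝ) 1 ∧ qt μ u ≤ x} = Ioo (0:ℝ) 1 ∩ Iic (cdfOf μ x) := by
  ext u
  simp only [mem_setOf_eq, mem_inter_iff, mem_Iic]
  constructor
  · rintro ⟨hu, hq⟩
    rw [qt_eq μ hu] at hq
    exact ⟨hu, (quantile_le_iff μ hu.1 hu.2 x).1 hq⟩
  · rintro ⟨hu, hx⟩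
    exact ⟨hu, by rw [qt_eq μ hu]; exact (quantile_le_iff μ hu.1 hu.2 x).2 hx⟩

lemma qt_measurable : Measurable (qt μ) := by
  apply measurable_of_Iic
  intro x
  have : qt μ ⁻¹' Iic x =
      (Ioo (0:ℝ) 1 ∩ Iic (cdfOf μ x)) ∪ ((Ioo (0:ℝ) 1)ᶜ ∩ {u : ℝ | (0:ℝ) ≤ x}) := by
    ext u
    by_cases hu : u ∈ Ioo (0:ℝ) 1
    · simp only [mem_preimage, mem_Iic, mem_union, mem_inter_iff, mem_compl_iff, hu,
        not_true_eq_false, false_and, or_false, mem_setOf_eq]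
      constructor
      · intro h; exact ⟨trivial, ((qt_preimage μ x).subset ⟨hu, h⟩).2⟩
      · rintro ⟨-, hx⟩
        exact (((qt_preimage μ x).symm.subset ⟨hu, hx⟩) : _).2
    · simp only [mem_preimage, mem_Iic, qt, indicator_of_notMem hu, mem_union, mem_inter_iff,
        hu, false_and, false_or, mem_compl_iff, not_false_eq_true, true_and, mem_setOf_eq]
  rw [this]
  by_cases hx : (0:ℝ) ≤ x
  · simp only [hx, setOf_true]
    exact ((measurableSet_Ioo.inter measurableSet_Iic).union
      (measurableSet_Ioo.compl.inter MeasurableSet.univ))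
  · have : {u : ℝ | (0:ℝ) ≤ x} = ∅ := by simp [hx]
    rw [this]
    simpa using (measurableSet_Ioo.inter measurableSet_Iic).union
      (measurableSet_Ioo.compl.inter MeasurableSet.empty)

instance : IsProbabilityMeasure (volume.restrict (Ioo (0:ℝ) 1)) :=
  ⟨by rw [Measure.restrict_apply_univ, Real.volume_Ioo]; norm_num⟩

lemma qt_map : (volume.restrict (Ioo (0:ℝ) 1)).map (qt μ) = μ := by
  have : IsProbabilityMeasure ((volume.restrict (Ioo (0:ℝ) 1)).map (qt μ)) :=
    Measure.isProbabilityMeasure_map (qt_measurable μ).aemeasurable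
  refine Measure.ext_of_Iic _ _ (fun x => ?_)
  rw [Measure.map_apply (qt_measurable μ) measurableSet_Iic,
    Measure.restrict_apply ((qt_measurable μ) measurableSet_Iic)]
  have hset : qt μ ⁻¹' Iic x ∩ Ioo 0 1 = Ioo (0:ℝ) 1 ∩ Iic (cdfOf μ x) := by
    rw [← qt_preimage μ x]; ext u; simp [mem_setOf_eq, and_comm]
  rw [hset]
  have h0 : 0 ≤ cdfOf μ x := cdfOf_nonneg μ x
  have h1 : cdfOf μ x ≤ 1 := cdfOf_le_one μ x
  have := vol_sandwich (m := 0) (M := cdfOf μ x) (Ioo (0:ℝ) 1 ∩ Iic (cdfOf μ x))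
    (fun u hu => ⟨⟨hu.1, lt_of_lt_of_le hu.2 h1⟩, hu.2.le⟩)
    (fun u hu => ⟨hu.1.1, hu.2⟩)
  rw [this, sub_zero, cdfOf_eq, ProbabilityTheory.ofReal_cdf]

end Push

lemma ne_set_eq {α : Type*} (A B : Set α) :
    {x | (x ∈ A) ≠ (x ∈ B)} = (A \ B) ∪ (B \ A) := by
  ext x
  by_cases h1 : x ∈ A <;> by_cases h2 : x ∈ B <;> simp [h1, h2]

lemma vol_xor_right (a b : ℝ) :
    volume {t : ℝ | (a ≤ t) ≠ (b ≤ t)} = ENNReal.ofReal |a - b| := by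
  have : {t : ℝ | (a ≤ t) ≠ (b ≤ t)} = Ico (min a b) (max a b) := by
    ext t; exact xor_le_right a b t
  rw [this, Real.volume_Ico, max_sub_min_eq_abs, abs_sub_comm]

section Swap
variable (μ ν : Measure ℝ) [IsProbabilityMeasure μ] [IsProbabilityMeasure ν]

lemma key_swap :
    ∫⁻ u in Ioo (0:ℝ) 1, ENNReal.ofReal |qt μ u - qt ν u| =
      ∫⁻ t, ENNReal.ofReal |cdfOf μ t - cdfOf ν t| := by
  set s : Set (ℝ × ℝ) := {p | (qt μ p.1 ≤ p.2) ≠ (qt ν p.1 ≤ p.2)} with hs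
  have hA : MeasurableSet {p : ℝ × ℝ | qt μ p.1 ≤ p.2} :=
    measurableSet_le ((qt_measurable μ).comp measurable_fst) measurable_snd
  have hB : MeasurableSet {p : ℝ × ℝ | qt ν p.1 ≤ p.2} :=
    measurableSet_le ((qt_measurable ν).comp measurable_fst) measurable_snd
  have hsm : MeasurableSet s := by
    have : s = ({p : ℝ × ℝ | qt μ p.1 ≤ p.2} \ {p : ℝ × ℝ | qt ν p.1 ≤ p.2}) ∪
        ({p : ℝ × ℝ | qt ν p.1 ≤ p.2} \ {p : ℝ × ℝ | qt μ p.1 ≤ p.2}) := by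
      rw [hs]; exact ne_set_eq _ _
    rw [this]
    exact (hA.diff hB).union (hB.diff hA)
  have h1 : ((volume.restrict (Ioo (0:ℝ) 1)).prod volume) s =
      ∫⁻ u in Ioo (0:ℝ) 1, ENNReal.ofReal |qt μ u - qt ν u| := by
    rw [Measure.prod_apply hsm]
    refine lintegral_congr (fun u => ?_)
    have : Prod.mk u ⁻¹' s = {t : ℝ | (qt μ u ≤ t) ≠ (qt ν u ≤ t)} := rfl
    rw [this, vol_xor_right]
  have h2 : ((volume.restrict (Ioo (0:ℝ) 1)).prod volume) s =
      ∫⁻ t, ENNReal.ofReal |cdfOf μ t - cdfOf ν t| := by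
    rw [Measure.prod_apply_symm hsm]
    refine lintegral_congr (fun t => ?_)
    have hsec : MeasurableSet ((fun u => (u, t)) ⁻¹' s) :=
      hsm.preimage (measurable_id.prodMk measurable_const)
    rw [Measure.restrict_apply hsec]
    set F := cdfOf μ
    set G := cdfOf ν
    have hint : (fun u => (u, t)) ⁻¹' s ∩ Ioo (0:ℝ) 1 =
        Ioc (min (F t) (G t)) (max (F t) (G t)) ∩ Ioo (0:ℝ) 1 := by
      ext u
      simp only [mem_inter_iff, mem_preimage, hs, mem_setOf_eq]
      constructor
      · rintro ⟨hne, hu⟩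
        refine ⟨?_, hu⟩
        rw [qt_eq μ hu, qt_eq ν hu] at hne
        have hμ' : (quantile F u ≤ t) = (u ≤ F t) := by
          exact propext (quantile_le_iff μ hu.1 hu.2 t)
        have hν' : (quantile G u ≤ t) = (u ≤ G t) := by
          exact propext (quantile_le_iff ν hu.1 hu.2 t)
        rw [hμ', hν'] at hne
        exact (xor_le_left _ _ u).1 hne
      · rintro ⟨hmem, hu⟩
        refine ⟨?_, hu⟩
        rw [qt_eq μ hu, qt_eq ν hu]
        have hμ' : (quantile F u ≤ t) = (u ≤ F t) := by
          exact propext (quantile_le_iff μ hu.1 hu.2 t)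
        have hν' : (quantile G u ≤ t) = (u ≤ G t) := by
          exact propext (quantile_le_iff ν hu.1 hu.2 t)
        rw [hμ', hν']
        exact (xor_le_left _ _ u).2 hmem
    rw [hint]
    have h0 : 0 ≤ min (F t) (G t) := le_min (cdfOf_nonneg μ t) (cdfOf_nonneg ν t)
    have h1' : max (F t) (G t) ≤ 1 := max_le (cdfOf_le_one μ t) (cdfOf_le_one ν t)
    have := vol_sandwich (m := min (F t) (G t)) (M := max (F t) (G t))
      (Ioc (min (F t) (G t)) (max (F t) (G t)) ∩ Ioo (0:ℝ) 1)
      (fun u hu => ⟨⟨hu.1, hu.2.le⟩, ⟨lt_of_le_of_lt h0 hu.1, lt_of_lt_of_le hu.2 h1'⟩⟩)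
      (fun u hu => hu.1)
    rw [this, max_sub_min_eq_abs, abs_sub_comm]
  rw [← h1, h2]

end Swap

section Fin
variable (μ ν : Measure ℝ) [IsProbabilityMeasure μ] [IsProbabilityMeasure ν]

lemma lint_qt_abs : ∫⁻ u in Ioo (0:ℝ) 1, ENNReal.ofReal |qt μ u| =
    ∫⁻ x, ENNReal.ofReal |x| ∂μ := by
  conv_rhs => rw [← qt_map μ]
  rw [lintegral_map (measurable_abs.ennreal_ofReal) (qt_measurable μ)]

lemma lint_abs_lt_top (hμ : Integrable id μ) :
    ∫⁻ x, ENNReal.ofReal |x| ∂μ < ⊤ := by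
  have := hμ.hasFiniteIntegral
  rw [HasFiniteIntegral] at this
  refine lt_of_le_of_lt (le_of_eq ?_) this
  refine lintegral_congr fun x => ?_
  rw [← Real.enorm_eq_ofReal_abs]
  rfl

lemma lint_qt_diff_lt_top (hμ : Integrable id μ) (hν : Integrable id ν) :
    ∫⁻ u in Ioo (0:ℝ) 1, ENNReal.ofReal |qt μ u - qt ν u| < ⊤ := by
  have hle : ∀ u : ℝ, ENNReal.ofReal |qt μ u - qt ν u| ≤
      ENNReal.ofReal |qt μ u| + ENNReal.ofReal |qt ν u| := by
    intro u
    rw [← ENNReal.ofReal_add (abs_nonneg _) (abs_nonneg _)]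
    exact ENNReal.ofReal_le_ofReal (abs_sub _ _)
  calc ∫⁻ u in Ioo (0:ℝ) 1, ENNReal.ofReal |qt μ u - qt ν u|
      ≤ ∫⁻ u in Ioo (0:ℝ) 1, (ENNReal.ofReal |qt μ u| + ENNReal.ofReal |qt ν u|) :=
        lintegral_mono hle
    _ = (∫⁻ u in Ioo (0:ℝ) 1, ENNReal.ofReal |qt μ u|) +
        ∫⁻ u in Ioo (0:ℝ) 1, ENNReal.ofReal |qt ν u| :=
        lintegral_add_left ((qt_measurable μ).abs.ennreal_ofReal) _
    _ < ⊤ := by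
        rw [lint_qt_abs μ, lint_qt_abs ν]
        exact ENNReal.add_lt_top.2 ⟨lint_abs_lt_top μ hμ, lint_abs_lt_top ν hν⟩

lemma lint_cdf_diff_lt_top (hμ : Integrable id μ) (hν : Integrable id ν) :
    ∫⁻ t, ENNReal.ofReal |cdfOf μ t - cdfOf ν t| < ⊤ := by
  rw [← key_swap μ ν]
  exact lint_qt_diff_lt_top μ ν hμ hν

lemma stmt4_lemma :
    (∫ u in Ioo (0:ℝ) 1, |quantile (cdfOf μ) u - quantile (cdfOf ν) u|)
      = ∫ x, |cdfOf μ x - cdfOf ν x| := by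
  have hae : (fun u => |quantile (cdfOf μ) u - quantile (cdfOf ν) u|)
      =ᵐ[volume.restrict (Ioo (0:ℝ) 1)] (fun u => |qt μ u - qt ν u|) := by
    filter_upwards [ae_restrict_mem measurableSet_Ioo] with u hu
    rw [qt_eq μ hu, qt_eq ν hu]
  rw [integral_congr_ae hae,
    integral_eq_lintegral_of_nonneg_ae (f := fun u => |qt μ u - qt ν u|) (ae_of_all _ fun u => abs_nonneg _)
      ((qt_measurable μ).sub (qt_measurable ν)).abs.aestronglyMeasurable,
    integral_eq_lintegral_of_nonneg_ae (f := fun x => |cdfOf μ x - cdfOf ν x|) (ae_of_all _ fun x => abs_nonneg _)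
      (((cdfOf_mono μ).measurable.sub (cdfOf_mono ν).measurable).abs.aestronglyMeasurable),
    key_swap]

lemma coupling_lower (π : Measure (ℝ × ℝ)) [IsProbabilityMeasure π]
    (h1 : π.map Prod.fst = μ) (h2 : π.map Prod.snd = ν) :
    ∫⁻ t, ENNReal.ofReal |cdfOf μ t - cdfOf ν t| ≤ ∫⁻ p, ENNReal.ofReal |p.1 - p.2| ∂π := by
  set s : Set ((ℝ × ℝ) × ℝ) := {q | (q.1.1 ≤ q.2) ≠ (q.1.2 ≤ q.2)} with hs
  have hA : MeasurableSet {q : (ℝ × ℝ) × ℝ | q.1.1 ≤ q.2} :=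
    measurableSet_le (measurable_fst.fst) measurable_snd
  have hB : MeasurableSet {q : (ℝ × ℝ) × ℝ | q.1.2 ≤ q.2} :=
    measurableSet_le (measurable_fst.snd) measurable_snd
  have hsm : MeasurableSet s := by
    have : s = ({q : (ℝ × ℝ) × ℝ | q.1.1 ≤ q.2} \ {q : (ℝ × ℝ) × ℝ | q.1.2 ≤ q.2}) ∪
        ({q : (ℝ × ℝ) × ℝ | q.1.2 ≤ q.2} \ {q : (ℝ × ℝ) × ℝ | q.1.1 ≤ q.2}) := by
      rw [hs]; exact ne_set_eq _ _
    rw [this]; exact (hA.diff hB).union (hB.diff hA)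
  have heq1 : (π.prod volume) s = ∫⁻ p, ENNReal.ofReal |p.1 - p.2| ∂π := by
    rw [Measure.prod_apply hsm]
    refine lintegral_congr fun p => ?_
    have : Prod.mk p ⁻¹' s = {t : ℝ | (p.1 ≤ t) ≠ (p.2 ≤ t)} := rfl
    rw [this, vol_xor_right]
  have hπA : ∀ t : ℝ, π {p : ℝ × ℝ | p.1 ≤ t} = ENNReal.ofReal (cdfOf μ t) := by
    intro t
    have : {p : ℝ × ℝ | p.1 ≤ t} = Prod.fst ⁻¹' (Iic t) := rfl
    rw [this, ← Measure.map_apply measurable_fst measurableSet_Iic, h1,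
      cdfOf_eq, ProbabilityTheory.ofReal_cdf]
  have hπB : ∀ t : ℝ, π {p : ℝ × ℝ | p.2 ≤ t} = ENNReal.ofReal (cdfOf ν t) := by
    intro t
    have : {p : ℝ × ℝ | p.2 ≤ t} = Prod.snd ⁻¹' (Iic t) := rfl
    rw [this, ← Measure.map_apply measurable_snd measurableSet_Iic, h2,
      cdfOf_eq, ProbabilityTheory.ofReal_cdf]
  have hsect : ∀ t : ℝ, ENNReal.ofReal |cdfOf μ t - cdfOf ν t| ≤
      π ((fun p => (p, t)) ⁻¹' s) := by
    intro t
    have hsec_eq : (fun p : ℝ × ℝ => (p, t)) ⁻¹' s =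
        ({p : ℝ × ℝ | p.1 ≤ t} \ {p : ℝ × ℝ | p.2 ≤ t}) ∪
        ({p : ℝ × ℝ | p.2 ≤ t} \ {p : ℝ × ℝ | p.1 ≤ t}) := by
      ext p
      by_cases hp1 : p.1 ≤ t <;> by_cases hp2 : p.2 ≤ t <;> simp [hs, hp1, hp2]
    rw [hsec_eq]
    rcases le_total (cdfOf μ t) (cdfOf ν t) with h | h
    · rw [abs_sub_comm, abs_of_nonneg (by linarith)]
      calc ENNReal.ofReal (cdfOf ν t - cdfOf μ t)
          = ENNReal.ofReal (cdfOf ν t) - ENNReal.ofReal (cdfOf μ t) :=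
            ENNReal.ofReal_sub _ (cdfOf_nonneg μ t)
        _ = π {p : ℝ × ℝ | p.2 ≤ t} - π {p : ℝ × ℝ | p.1 ≤ t} := by rw [hπA, hπB]
        _ ≤ π ({p : ℝ × ℝ | p.2 ≤ t} \ {p : ℝ × ℝ | p.1 ≤ t}) := le_measure_diff
        _ ≤ _ := measure_mono subset_union_right
    · rw [abs_of_nonneg (by linarith)]
      calc ENNReal.ofReal (cdfOf μ t - cdfOf ν t)
          = ENNReal.ofReal (cdfOf μ t) - ENNReal.ofReal (cdfOf ν t) :=
            ENNReal.ofReal_sub _ (cdfOf_nonneg ν t)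
        _ = π {p : ℝ × ℝ | p.1 ≤ t} - π {p : ℝ × ℝ | p.2 ≤ t} := by rw [hπA, hπB]
        _ ≤ π ({p : ℝ × ℝ | p.1 ≤ t} \ {p : ℝ × ℝ | p.2 ≤ t}) := le_measure_diff
        _ ≤ _ := measure_mono subset_union_left
  calc ∫⁻ t, ENNReal.ofReal |cdfOf μ t - cdfOf ν t|
      ≤ ∫⁻ t, π ((fun p => (p, t)) ⁻¹' s) := lintegral_mono hsect
    _ = (π.prod volume) s := (Measure.prod_apply_symm hsm).symm
    _ = ∫⁻ p, ENNReal.ofReal |p.1 - p.2| ∂π := heq1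

end Fin


theorem stmt_8 {Ω : Type*} [MeasurableSpace Ω] (P : Measure Ω) [IsProbabilityMeasure P]
    (μ ν : Measure ℝ) [IsProbabilityMeasure μ] [IsProbabilityMeasure ν]
    (hμ : Integrable id μ) (hν : Integrable id ν)
    (U : Ω → ℝ) (hU : P.map U = volume.restrict (Set.Ioo (0 : ℝ) 1)) :
    P.map (fun ω => quantile (cdfOf μ) (U ω)) = μ ∧
    P.map (fun ω => quantile (cdfOf ν) (U ω)) = ν ∧
    (∫ ω, |quantile (cdfOf μ) (U ω) - quantile (cdfOf ν) (U ω)| ∂P)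
      = ∫ u in Set.Ioo (0 : ℝ) 1, |quantile (cdfOf μ) u - quantile (cdfOf ν) u| ∧
    (∫ u in Set.Ioo (0 : ℝ) 1, |quantile (cdfOf μ) u - quantile (cdfOf ν) u|)
      = ∫ x, |cdfOf μ x - cdfOf ν x| ∧
    (∫ x, |cdfOf μ x - cdfOf ν x|) = wasserstein1 μ ν := by
  -- U is a.e. measurable
  have hU' : AEMeasurable U P := by
    by_contra h
    rw [Measure.map_of_not_aemeasurable h] at hU
    have h0 : (volume.restrict (Ioo (0:ℝ) 1)) univ = 0 := by rw [← hU]; simp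
    rw [measure_univ] at h0
    exact one_ne_zero h0
  -- U lands in (0,1) a.e.
  have hUmem : ∀ᵐ ω ∂P, U ω ∈ Ioo (0:ℝ) 1 := by
    have h0 : P (U ⁻¹' (Ioo (0:ℝ) 1)ᶜ) = 0 := by
      rw [← Measure.map_apply_of_aemeasurable hU' measurableSet_Ioo.compl, hU,
        Measure.restrict_apply measurableSet_Ioo.compl]
      simp
    rw [ae_iff]
    exact h0
  -- a.e. equalities with truncated quantiles
  have haeμ : (fun ω => quantile (cdfOf μ) (U ω)) =ᵐ[P] fun ω => qt μ (U ω) := by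
    filter_upwards [hUmem] with ω h
    exact (qt_eq μ h).symm
  have haeν : (fun ω => quantile (cdfOf ν) (U ω)) =ᵐ[P] fun ω => qt ν (U ω) := by
    filter_upwards [hUmem] with ω h
    exact (qt_eq ν h).symm
  -- Statement 1
  have stmt1 : P.map (fun ω => quantile (cdfOf μ) (U ω)) = μ := by
    calc P.map (fun ω => quantile (cdfOf μ) (U ω)) = P.map (fun ω => qt μ (U ω)) :=
          Measure.map_congr haeμ
      _ = (P.map U).map (qt μ) :=
          (AEMeasurable.map_map_of_aemeasurable (qt_measurable μ).aemeasurable hU').symm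
      _ = μ := by rw [hU]; exact qt_map μ
  have stmt2 : P.map (fun ω => quantile (cdfOf ν) (U ω)) = ν := by
    calc P.map (fun ω => quantile (cdfOf ν) (U ω)) = P.map (fun ω => qt ν (U ω)) :=
          Measure.map_congr haeν
      _ = (P.map U).map (qt ν) :=
          (AEMeasurable.map_map_of_aemeasurable (qt_measurable ν).aemeasurable hU').symm
      _ = ν := by rw [hU]; exact qt_map ν
  -- Statement 3
  have hae' : (fun u => |qt μ u - qt ν u|) =ᵐ[volume.restrict (Ioo (0:ℝ) 1)]
      (fun u => |quantile (cdfOf μ) u - quantile (cdfOf ν) u|) := by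
    filter_upwards [ae_restrict_mem measurableSet_Ioo] with u hu
    rw [qt_eq μ hu, qt_eq ν hu]
  have hf_aesm : AEStronglyMeasurable
      (fun u => |quantile (cdfOf μ) u - quantile (cdfOf ν) u|)
      (volume.restrict (Ioo (0:ℝ) 1)) :=
    (((qt_measurable μ).sub (qt_measurable ν)).abs.aestronglyMeasurable).congr hae'
  have stmt3 : (∫ ω, |quantile (cdfOf μ) (U ω) - quantile (cdfOf ν) (U ω)| ∂P)
      = ∫ u in Ioo (0:ℝ) 1, |quantile (cdfOf μ) u - quantile (cdfOf ν) u| := by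
    rw [show (volume.restrict (Ioo (0:ℝ) 1)) = P.map U from hU.symm]
    exact (integral_map hU' (by rw [hU]; exact hf_aesm)).symm
  -- Statement 4
  have stmt4 := stmt4_lemma μ ν
  -- Statement 5
  set W := ∫ x, |cdfOf μ x - cdfOf ν x| with hW
  have hW_lint : W = (∫⁻ t, ENNReal.ofReal |cdfOf μ t - cdfOf ν t|).toReal :=
    integral_eq_lintegral_of_nonneg_ae (ae_of_all _ fun x => abs_nonneg _)
      (((cdfOf_mono μ).measurable.sub (cdfOf_mono ν).measurable).abs.aestronglyMeasurable)
  -- the coupling given by the quantile transforms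
  have haeT : (fun ω => (quantile (cdfOf μ) (U ω), quantile (cdfOf ν) (U ω)))
      =ᵐ[P] fun ω => (qt μ (U ω), qt ν (U ω)) := by
    filter_upwards [hUmem] with ω h
    rw [qt_eq μ h, qt_eq ν h]
  have hTm : AEMeasurable (fun ω => (quantile (cdfOf μ) (U ω), quantile (cdfOf ν) (U ω))) P :=
    ((((qt_measurable μ).comp_aemeasurable hU').prodMk
      ((qt_measurable ν).comp_aemeasurable hU')).congr haeT.symm)
  have hmemW : W ∈ {c : ℝ | ∃ π : Measure (ℝ × ℝ), IsProbabilityMeasure π ∧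
      π.map Prod.fst = μ ∧ π.map Prod.snd = ν ∧ c = ∫ p, |p.1 - p.2| ∂π} := by
    refine ⟨P.map (fun ω => (quantile (cdfOf μ) (U ω), quantile (cdfOf ν) (U ω))),
      Measure.isProbabilityMeasure_map hTm, ?_, ?_, ?_⟩
    · rw [AEMeasurable.map_map_of_aemeasurable measurable_fst.aemeasurable hTm]
      exact stmt1
    · rw [AEMeasurable.map_map_of_aemeasurable measurable_snd.aemeasurable hTm]
      exact stmt2
    · rw [integral_map hTm (f := fun p : ℝ × ℝ => |p.1 - p.2|) ((measurable_fst.sub measurable_snd).abs.aestronglyMeasurable)]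
      simp only
      rw [← stmt4, ← stmt3]
  have hbdd : BddBelow {c : ℝ | ∃ π : Measure (ℝ × ℝ), IsProbabilityMeasure π ∧
      π.map Prod.fst = μ ∧ π.map Prod.snd = ν ∧ c = ∫ p, |p.1 - p.2| ∂π} := by
    refine ⟨0, ?_⟩
    rintro c ⟨π, hp, -, -, rfl⟩
    exact integral_nonneg fun p => abs_nonneg _
  have hlow : ∀ c ∈ {c : ℝ | ∃ π : Measure (ℝ × ℝ), IsProbabilityMeasure π ∧
      π.map Prod.fst = μ ∧ π.map Prod.snd = ν ∧ c = ∫ p, |p.1 - p.2| ∂π}, W ≤ c := by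
    rintro c ⟨π, hπp, hπ1, hπ2, rfl⟩
    have hi1 : Integrable (fun p : ℝ × ℝ => p.1) π := by
      have h := (integrable_map_measure aestronglyMeasurable_id
        measurable_fst.aemeasurable).1 (by rw [hπ1]; exact hμ)
      exact h
    have hi2 : Integrable (fun p : ℝ × ℝ => p.2) π := by
      have h := (integrable_map_measure aestronglyMeasurable_id
        measurable_snd.aemeasurable).1 (by rw [hπ2]; exact hν)
      exact h
    have hi : Integrable (fun p : ℝ × ℝ => |p.1 - p.2|) π := (hi1.sub hi2).abs
    have hc : (∫ p, |p.1 - p.2| ∂π)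
        = (∫⁻ p, ENNReal.ofReal |p.1 - p.2| ∂π).toReal :=
      integral_eq_lintegral_of_nonneg_ae (ae_of_all _ fun p => abs_nonneg _)
        ((measurable_fst.sub measurable_snd).abs.aestronglyMeasurable)
    have hfin : ∫⁻ p, ENNReal.ofReal |p.1 - p.2| ∂π ≠ ⊤ := by
      have := hi.hasFiniteIntegral
      rw [HasFiniteIntegral] at this
      refine ne_of_lt (lt_of_le_of_lt (le_of_eq ?_) this)
      refine lintegral_congr fun p => ?_
      rw [← Real.enorm_eq_ofReal_abs]
      simp
    rw [hW_lint, hc]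
    exact ENNReal.toReal_mono hfin (coupling_lower μ ν π hπ1 hπ2)
  have stmt5 : W = wasserstein1 μ ν :=
    le_antisymm (le_csInf ⟨W, hmemW⟩ hlow) (csInf_le hbdd hmemW)
  exact ⟨stmt1, stmt2, stmt3, stmt4, stmt5⟩
end

section
/- Let X₁, …, X_n be i.i.d. real random variables with E[X₁] = 0 and E[|X₁|^{1+κ}] < ∞ for some 0 < κ ≤ 1. Then there is a constant Q_{1+κ} depending only on κ such that for every x > 0, P(|∑_{i=1}^n X_i| > x) ≤ Q_{1+κ} · E[|X₁|^{1+κ}] · n / x^{1+κ}. -/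
open MeasureTheory ProbabilityTheory Finset

namespace Stmt12Aux

noncomputable def sgnPow (q u : ℝ) : ℝ := u * |u| ^ (q - 1)

lemma sgnPow_zero (q : ℝ) : sgnPow q 0 = 0 := by simp [sgnPow]

lemma sgnPow_neg (q u : ℝ) : sgnPow q (-u) = - sgnPow q u := by
  simp [sgnPow, abs_neg, neg_mul]

lemma sgnPow_of_nonneg {q u : ℝ} (hq : q ≠ 0) (hu : 0 ≤ u) : sgnPow q u = u ^ q := by
  rcases eq_or_lt_of_le hu with h | h
  · simp [sgnPow, ← h, Real.zero_rpow hq]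
  · rw [sgnPow, abs_of_pos h]
    calc u * u ^ (q - 1) = u ^ (1:ℝ) * u ^ (q - 1) := by rw [Real.rpow_one]
      _ = u ^ (1 + (q - 1)) := (Real.rpow_add h _ _).symm
      _ = u ^ q := by norm_num

lemma abs_sgnPow {q : ℝ} (hq : q ≠ 0) (u : ℝ) : |sgnPow q u| = |u| ^ q := by
  rcases le_total 0 u with h | h
  · rw [sgnPow_of_nonneg hq h, abs_of_nonneg (Real.rpow_nonneg h q), abs_of_nonneg h]
  · have h' : 0 ≤ -u := by linarith
    have := sgnPow_of_nonneg hq h'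
    rw [sgnPow_neg] at this
    have : sgnPow q u = -((-u) ^ q) := by linarith [this]
    rw [this, abs_neg, abs_of_nonneg (Real.rpow_nonneg h' q), abs_of_nonpos h]

lemma rpow_add_le {q a b : ℝ} (hq0 : 0 < q) (hq1 : q ≤ 1) (ha : 0 ≤ a) (hb : 0 ≤ b) :
    (a + b) ^ q ≤ a ^ q + b ^ q := by
  have h := NNReal.rpow_add_le_add_rpow a.toNNReal b.toNNReal hq0.le hq1
  rw [← NNReal.coe_le_coe] at h
  push_cast [NNReal.coe_rpow, Real.coe_toNNReal _ ha, Real.coe_toNNReal _ hb] at h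
  exact h

lemma rpow_sub_le {q a b : ℝ} (hq0 : 0 < q) (hq1 : q ≤ 1) (hb : 0 ≤ b) (hba : b ≤ a) :
    a ^ q - b ^ q ≤ (a - b) ^ q := by
  have h := rpow_add_le hq0 hq1 (sub_nonneg.2 hba) hb
  rw [sub_add_cancel] at h
  linarith

lemma sgnPow_holder_aux {q a b : ℝ} (hq0 : 0 < q) (hq1 : q ≤ 1) (hba : b ≤ a) :
    |sgnPow q a - sgnPow q b| ≤ 2 * |a - b| ^ q := by
  have hab : 0 ≤ a - b := sub_nonneg.2 hba
  have habq : 0 ≤ (a - b) ^ q := Real.rpow_nonneg hab q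
  rw [abs_of_nonneg hab]
  rcases le_total 0 b with hb | hb
  · have ha : 0 ≤ a := hb.trans hba
    rw [sgnPow_of_nonneg hq0.ne' ha, sgnPow_of_nonneg hq0.ne' hb]
    have h1 : b ^ q ≤ a ^ q := Real.rpow_le_rpow hb hba hq0.le
    rw [abs_of_nonneg (by linarith)]
    have := rpow_sub_le hq0 hq1 hb hba
    linarith
  · rcases le_total a 0 with ha | ha
    · -- both ≤ 0
      have h1 : 0 ≤ -a := by linarith
      have h2 : -a ≤ -b := by linarith
      rw [show sgnPow q a = -sgnPow q (-a) by rw [sgnPow_neg]; ring,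
        show sgnPow q b = -sgnPow q (-b) by rw [sgnPow_neg]; ring,
        sgnPow_of_nonneg hq0.ne' h1, sgnPow_of_nonneg hq0.ne' (h1.trans h2)]
      have h3 : (-a) ^ q ≤ (-b) ^ q := Real.rpow_le_rpow h1 h2 hq0.le
      rw [show -(-a)^q - -(-b)^q = (-b)^q - (-a)^q by ring, abs_of_nonneg (by linarith)]
      have := rpow_sub_le hq0 hq1 h1 h2
      rw [show -b - -a = a - b by ring] at this
      linarith
    · -- b ≤ 0 ≤ a
      rw [sgnPow_of_nonneg hq0.ne' ha,
        show sgnPow q b = -sgnPow q (-b) by rw [sgnPow_neg]; ring,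
        sgnPow_of_nonneg hq0.ne' (by linarith : (0:ℝ) ≤ -b)]
      have h1 : a ^ q ≤ (a - b) ^ q := Real.rpow_le_rpow ha (by linarith) hq0.le
      have h2 : (-b) ^ q ≤ (a - b) ^ q := Real.rpow_le_rpow (by linarith) (by linarith) hq0.le
      have h3 : 0 ≤ a ^ q := Real.rpow_nonneg ha q
      have h4 : 0 ≤ (-b) ^ q := Real.rpow_nonneg (by linarith) q
      rw [abs_of_nonneg (by linarith)]
      linarith

lemma sgnPow_holder {q : ℝ} (hq0 : 0 < q) (hq1 : q ≤ 1) (a b : ℝ) :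
    |sgnPow q a - sgnPow q b| ≤ 2 * |a - b| ^ q := by
  rcases le_total b a with h | h
  · exact sgnPow_holder_aux hq0 hq1 h
  · rw [abs_sub_comm, abs_sub_comm a b]
    exact sgnPow_holder_aux hq0 hq1 h


lemma hasDerivAt_abs_rpow {p : ℝ} (hp : 1 < p) (u : ℝ) :
    HasDerivAt (fun x : ℝ => |x| ^ p) (p * sgnPow (p - 1) u) u := by
  have hq : (0:ℝ) < p - 1 := by linarith
  rcases lt_trichotomy u 0 with hu | hu | hu
  · have h1 : HasDerivAt (fun x : ℝ => -x) (-1) u := (hasDerivAt_id u).neg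
    have h2 : HasDerivAt (fun y : ℝ => y ^ p) (p * (-u) ^ (p - 1)) (-u) :=
      Real.hasDerivAt_rpow_const (Or.inl (by linarith : -u ≠ 0))
    have h3 := h2.comp u h1
    have h4 : (fun x : ℝ => |x| ^ p) =ᶠ[nhds u] fun x => (-x) ^ p := by
      filter_upwards [eventually_lt_nhds hu] with x hx
      rw [abs_of_neg hx]
    have h5 := h3.congr_of_eventuallyEq h4
    refine h5.congr_deriv ?_
    rw [show sgnPow (p - 1) u = -sgnPow (p - 1) (-u) by rw [sgnPow_neg]; ring,
      sgnPow_of_nonneg hq.ne' (by linarith : (0:ℝ) ≤ -u)]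
    ring
  · subst hu
    rw [hasDerivAt_iff_tendsto_slope, sgnPow_zero, mul_zero]
    refine squeeze_zero_norm (a := fun x : ℝ => |x| ^ (p - 1)) ?_ ?_
    · intro x
      rcases eq_or_ne x 0 with rfl | hx
      · simp [Real.rpow_nonneg]
      · have hx' : (0:ℝ) < |x| := abs_pos.2 hx
        have hs : slope (fun y : ℝ => |y| ^ p) 0 x = |x| ^ p / x := by
          rw [slope_def_field]
          simp [Real.zero_rpow (by linarith : p ≠ 0)]
        have habs : |x| ^ (p - 1) * |x| = |x| ^ p := by
          have h := Real.rpow_add hx' (p - 1) 1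
          rw [Real.rpow_one] at h
          rw [← h]; congr 1; ring
        rw [hs, Real.norm_eq_abs, abs_div, abs_of_nonneg (Real.rpow_nonneg (abs_nonneg x) p)]
        rw [← habs, mul_div_assoc, div_self hx'.ne', mul_one]
    · have hc : Continuous fun x : ℝ => |x| ^ (p - 1) :=
        continuous_abs.rpow_const (fun x => Or.inr hq.le)
      have := hc.tendsto 0
      simp only [abs_zero, Real.zero_rpow hq.ne'] at this
      exact this.mono_left nhdsWithin_le_nhds
  · have h2 : HasDerivAt (fun y : ℝ => y ^ p) (p * u ^ (p - 1)) u :=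
      Real.hasDerivAt_rpow_const (Or.inl hu.ne')
    have h4 : (fun x : ℝ => |x| ^ p) =ᶠ[nhds u] fun x => x ^ p := by
      filter_upwards [eventually_gt_nhds hu] with x hx
      rw [abs_of_pos hx]
    have h5 := h2.congr_of_eventuallyEq h4
    refine h5.congr_deriv ?_
    rw [sgnPow_of_nonneg hq.ne' hu.le]

lemma key_ineq {p : ℝ} (hp1 : 1 < p) (hp2 : p ≤ 2) (a b : ℝ) :
    |a + b| ^ p ≤ |a| ^ p + p * sgnPow (p - 1) a * b + 2 * p * |b| ^ p := by
  rcases eq_or_ne b 0 with rfl | hb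
  · simp [Real.zero_rpow (show p ≠ 0 by positivity)]
  have hb' : 0 < |b| := abs_pos.2 hb
  have hq0 : (0:ℝ) < p - 1 := by linarith
  have hq1 : p - 1 ≤ 1 := by linarith
  set g : ℝ → ℝ := fun t => |a + t| ^ p - p * sgnPow (p - 1) a * t with hgdef
  have hderiv : ∀ t : ℝ, HasDerivAt g (p * sgnPow (p - 1) (a + t) - p * sgnPow (p - 1) a) t := by
    intro t
    have h1 : HasDerivAt (fun t : ℝ => a + t) 1 t := (hasDerivAt_id t).const_add a
    have h2 := (hasDerivAt_abs_rpow hp1 (a + t)).comp t h1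
    have h3 : HasDerivAt (fun t : ℝ => p * sgnPow (p - 1) a * t) (p * sgnPow (p - 1) a) t := by
      simpa using (hasDerivAt_id t).const_mul (p * sgnPow (p - 1) a)
    exact (h2.sub h3).congr_deriv (by ring)
  have hC : ∀ t ∈ Set.uIcc (0:ℝ) b,
      ‖p * sgnPow (p - 1) (a + t) - p * sgnPow (p - 1) a‖ ≤ p * (2 * |b| ^ (p - 1)) := by
    intro t ht
    have htb : |t| ≤ |b| := by
      rcases le_total 0 b with h | h
      · rw [Set.uIcc_of_le (by linarith)] at ht
        rw [abs_of_nonneg ht.1, abs_of_nonneg h]; exact ht.2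
      · rw [Set.uIcc_of_ge (by linarith)] at ht
        rw [abs_of_nonpos ht.2, abs_of_nonpos h]; linarith [ht.1]
    have h1 : |sgnPow (p - 1) (a + t) - sgnPow (p - 1) a| ≤ 2 * |t| ^ (p - 1) := by
      have := sgnPow_holder hq0 hq1 (a + t) a
      simpa using this
    have h2 : |t| ^ (p - 1) ≤ |b| ^ (p - 1) := Real.rpow_le_rpow (abs_nonneg t) htb hq0.le
    rw [show p * sgnPow (p - 1) (a + t) - p * sgnPow (p - 1) a
        = p * (sgnPow (p - 1) (a + t) - sgnPow (p - 1) a) by ring,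
      Real.norm_eq_abs, abs_mul, abs_of_pos (by linarith : (0:ℝ) < p)]
    have := mul_le_mul_of_nonneg_left h1 (by linarith : (0:ℝ) ≤ p)
    nlinarith
  have hmain := Convex.norm_image_sub_le_of_norm_hasDerivWithin_le
      (f := g) (f' := fun t => p * sgnPow (p - 1) (a + t) - p * sgnPow (p - 1) a)
      (fun t _ => (hderiv t).hasDerivWithinAt) hC (convex_uIcc 0 b)
      Set.left_mem_uIcc Set.right_mem_uIcc
  have hg0 : g 0 = |a| ^ p := by simp [hgdef]
  have hgb : g b = |a + b| ^ p - p * sgnPow (p - 1) a * b := rfl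
  rw [hg0, hgb, Real.norm_eq_abs, Real.norm_eq_abs, sub_zero] at hmain
  have habs : |b| ^ (p - 1) * |b| = |b| ^ p := by
    have h := Real.rpow_add hb' (p - 1) 1
    rw [Real.rpow_one] at h
    rw [← h]
    congr 1
    ring
  have h1 := le_abs_self (|a + b| ^ p - p * sgnPow (p - 1) a * b - |a| ^ p)
  nlinarith [hmain, h1]

lemma crude_bound {p : ℝ} (hp1 : 1 ≤ p) (hp2 : p ≤ 2) (a b : ℝ) :
    |a + b| ^ p ≤ 4 * (|a| ^ p + |b| ^ p) := by
  have h0 : (0:ℝ) ≤ p := by linarith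
  have h2p : (2:ℝ) ^ p ≤ 4 := by
    calc (2:ℝ) ^ p ≤ (2:ℝ) ^ (2:ℝ) :=
          Real.rpow_le_rpow_of_exponent_le (by norm_num) hp2
      _ = (2:ℝ) ^ ((2:ℕ):ℝ) := by norm_num
      _ = (2:ℝ) ^ (2:ℕ) := Real.rpow_natCast 2 2
      _ = 4 := by norm_num
  have key : ∀ c d : ℝ, |c| ≤ |d| → |c + d| ^ p ≤ 4 * (|c| ^ p + |d| ^ p) := by
    intro c d h
    have h1 : |c + d| ≤ 2 * |d| := by
      have := abs_add_le c d; linarith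
    have hcp : 0 ≤ |c| ^ p := Real.rpow_nonneg (abs_nonneg c) p
    have hdp : 0 ≤ |d| ^ p := Real.rpow_nonneg (abs_nonneg d) p
    calc |c + d| ^ p ≤ (2 * |d|) ^ p := Real.rpow_le_rpow (abs_nonneg _) h1 h0
      _ = 2 ^ p * |d| ^ p := Real.mul_rpow (by norm_num) (abs_nonneg d)
      _ ≤ 4 * |d| ^ p := mul_le_mul_of_nonneg_right h2p hdp
      _ ≤ 4 * (|c| ^ p + |d| ^ p) := by nlinarith
  rcases le_total |a| |b| with h | h
  · exact key a b h
  · have := key b a h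
    rw [add_comm b a] at this
    linarith

lemma rpow_pred_le {p x : ℝ} (hp1 : 1 < p) (hx : 0 ≤ x) : x ^ (p - 1) ≤ 1 + x ^ p := by
  have hxp : 0 ≤ x ^ p := Real.rpow_nonneg hx p
  rcases le_total x 1 with h | h
  · have := Real.rpow_le_one hx h (by linarith : (0:ℝ) ≤ p - 1)
    linarith
  · have h1 : x ^ (p - 1) ≤ x ^ p :=
      Real.rpow_le_rpow_of_exponent_le h (by linarith)
    linarith


lemma moment_bound {p : ℝ} (hp1 : 1 < p) (hp2 : p ≤ 2)
    {Ω : Type} [MeasurableSpace Ω] {P : Measure Ω} [IsProbabilityMeasure P]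
    {X : ℕ → Ω → ℝ} (hmeas : ∀ i, Measurable (X i))
    (hindep : iIndepFun X P)
    (hid : ∀ i, IdentDistrib (X i) (X 0) P P)
    (hint : Integrable (X 0) P) (hmean : (∫ ω, X 0 ω ∂P) = 0)
    (hmom : Integrable (fun ω => |X 0 ω| ^ p) P) (k : ℕ) :
    Integrable (fun ω => |∑ i ∈ range k, X i ω| ^ p) P ∧
      ∫ ω, |∑ i ∈ range k, X i ω| ^ p ∂P ≤ 2 * p * k * (∫ ω, |X 0 ω| ^ p ∂P) := by
  have hp0 : (0:ℝ) < p := by linarith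
  have habs_meas : Measurable fun u : ℝ => |u| ^ p := by fun_prop
  have hXint : ∀ i, Integrable (X i) P := fun i => (hid i).integrable_iff.mpr hint
  have hXmom : ∀ i, Integrable (fun ω => |X i ω| ^ p) P := fun i => by
    have := ((hid i).comp habs_meas).integrable_iff.mpr
    simp only [Function.comp_def] at this
    exact this hmom
  have hXmomeq : ∀ i, ∫ ω, |X i ω| ^ p ∂P = ∫ ω, |X 0 ω| ^ p ∂P := fun i => by
    have := ((hid i).comp habs_meas).integral_eq
    simpa [Function.comp_def] using this
  have hXmean : ∀ i, ∫ ω, X i ω ∂P = 0 := fun i => by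
    rw [(hid i).integral_eq]; exact hmean
  have hM0 : 0 ≤ ∫ ω, |X 0 ω| ^ p ∂P :=
    integral_nonneg fun ω => Real.rpow_nonneg (abs_nonneg _) p
  induction k with
  | zero =>
      simp [Real.zero_rpow hp0.ne']
  | succ k ih =>
      obtain ⟨ih1, ih2⟩ := ih
      set S : Ω → ℝ := fun ω => ∑ i ∈ range k, X i ω with hSdef
      have hSmeas : Measurable S := by
        apply Finset.measurable_sum
        intro i _
        exact hmeas i
      set Z : Ω → ℝ := fun ω => p * sgnPow (p - 1) (S ω) with hZdef
      have hφmeas : Measurable fun u : ℝ => p * sgnPow (p - 1) u := by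
        unfold sgnPow; fun_prop
      have hZmeas : Measurable Z := hφmeas.comp hSmeas
      have hZbound : ∀ ω, ‖Z ω‖ ≤ p * (1 + |S ω| ^ p) := by
        intro ω
        rw [Real.norm_eq_abs, hZdef, abs_mul, abs_of_pos hp0,
          abs_sgnPow (by linarith : p - 1 ≠ 0)]
        exact mul_le_mul_of_nonneg_left (rpow_pred_le hp1 (abs_nonneg _)) hp0.le
      have hZint : Integrable Z P := by
        refine Integrable.mono' (((integrable_const (1:ℝ)).add ih1).const_mul p)
          hZmeas.aestronglyMeasurable (Filter.Eventually.of_forall ?_)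
        intro ω
        simpa using hZbound ω
      have hindSX : IndepFun S (X k) P := by
        have h := hindep.indepFun_finsetSum_of_notMem hmeas
          (show k ∉ range k by simp)
        have heq : (∑ j ∈ range k, X j) = S := by
          ext ω; simp [hSdef]
        rwa [heq] at h
      have hindZX : IndepFun Z (X k) P := by
        have := hindSX.comp hφmeas measurable_id
        simpa [Function.comp_def] using this
      have hprod_int : Integrable (fun ω => Z ω * X k ω) P :=
        hindZX.integrable_mul hZint (hXint k)
      have hprod_zero : ∫ ω, Z ω * X k ω ∂P = 0 := by
        have h := hindZX.integral_fun_mul_eq_mul_integral hZint.aestronglyMeasurable (hXint k).aestronglyMeasurable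
        have h2 : ∫ ω, Z ω * X k ω ∂P = (∫ ω, Z ω ∂P) * ∫ ω, X k ω ∂P := h
        rw [h2, hXmean k, mul_zero]
      have hnewmeas : Measurable fun ω => |S ω + X k ω| ^ p :=
        habs_meas.comp (hSmeas.add (hmeas k))
      have hnewint : Integrable (fun ω => |S ω + X k ω| ^ p) P := by
        refine Integrable.mono' ((ih1.add (hXmom k)).const_mul 4)
          hnewmeas.aestronglyMeasurable (Filter.Eventually.of_forall ?_)
        intro ω
        rw [Real.norm_eq_abs, abs_of_nonneg (Real.rpow_nonneg (abs_nonneg _) p)]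
        exact crude_bound hp1.le hp2 _ _
      have hpt : ∀ ω, |S ω + X k ω| ^ p ≤
          |S ω| ^ p + Z ω * X k ω + 2 * p * |X k ω| ^ p := fun ω =>
        key_ineq hp1 hp2 (S ω) (X k ω)
      have hRHSint : Integrable
          (fun ω => |S ω| ^ p + Z ω * X k ω + 2 * p * |X k ω| ^ p) P :=
        (ih1.add hprod_int).add ((hXmom k).const_mul (2 * p))
      have hint1 : Integrable (fun ω => |S ω| ^ p + Z ω * X k ω) P := ih1.add hprod_int
      have hle : ∫ ω, |S ω + X k ω| ^ p ∂P ≤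
          ∫ ω, (|S ω| ^ p + Z ω * X k ω + 2 * p * |X k ω| ^ p) ∂P :=
        integral_mono hnewint hRHSint hpt
      rw [integral_add hint1 ((hXmom k).const_mul (2 * p)), integral_add ih1 hprod_int,
        integral_const_mul, hprod_zero, hXmomeq k] at hle
      have hfin : ∫ ω, |S ω + X k ω| ^ p ∂P ≤
          2 * p * (k + 1) * ∫ ω, |X 0 ω| ^ p ∂P := by
        nlinarith [hle, ih2, hM0, hp0]
      constructor
      · simp only [Finset.sum_range_succ]
        exact hnewint
      · simp only [Finset.sum_range_succ]
        push_cast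
        exact hfin

end Stmt12Aux


theorem stmt_12 (κ : ℝ) (hκ0 : 0 < κ) (hκ1 : κ ≤ 1) :
    ∃ Q : ℝ, 0 < Q ∧
      ∀ (Ω : Type) (_ : MeasurableSpace Ω) (P : Measure Ω), IsProbabilityMeasure P →
        ∀ (n : ℕ) (X : ℕ → Ω → ℝ), (∀ i, Measurable (X i)) →
          iIndepFun X P →
          (∀ i, IdentDistrib (X i) (X 0) P P) →
          Integrable (X 0) P → (∫ ω, X 0 ω ∂P) = 0 →
          Integrable (fun ω => |X 0 ω| ^ (1 + κ)) P →
          ∀ x : ℝ, 0 < x →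
            (P {ω | x < |∑ i ∈ Finset.range n, X i ω|}).toReal ≤
              Q * (∫ ω, |X 0 ω| ^ (1 + κ) ∂P) * n / x ^ (1 + κ) := by
  refine ⟨2 * (1 + κ), by linarith, ?_⟩
  intro Ω mΩ P hP n X hmeas hindep hid hint hmean hmom x hx
  have hp1 : (1:ℝ) < 1 + κ := by linarith
  have hp2 : (1:ℝ) + κ ≤ 2 := by linarith
  obtain ⟨hin, hbd⟩ :=
    Stmt12Aux.moment_bound hp1 hp2 hmeas hindep hid hint hmean hmom n
  have hxp : 0 < x ^ (1 + κ) := Real.rpow_pos_of_pos hx _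
  have hmarkov := mul_meas_ge_le_integral_of_nonneg
    (Filter.Eventually.of_forall fun ω =>
      Real.rpow_nonneg (abs_nonneg (∑ i ∈ Finset.range n, X i ω)) (1 + κ)) hin (x ^ (1 + κ))
  have hsub : {ω | x < |∑ i ∈ Finset.range n, X i ω|} ⊆
      {ω | x ^ (1 + κ) ≤ |∑ i ∈ Finset.range n, X i ω| ^ (1 + κ)} := fun ω h =>
    Real.rpow_le_rpow hx.le (le_of_lt h) (by positivity)
  have hmono : (P {ω | x < |∑ i ∈ Finset.range n, X i ω|}).toReal ≤
      (P {ω | x ^ (1 + κ) ≤ |∑ i ∈ Finset.range n, X i ω| ^ (1 + κ)}).toReal :=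
    ENNReal.toReal_mono (measure_ne_top P _) (measure_mono hsub)
  have hM0 : 0 ≤ ∫ ω, |X 0 ω| ^ (1 + κ) ∂P :=
    integral_nonneg fun ω => Real.rpow_nonneg (abs_nonneg _) _
  have h1 : (P {ω | x ^ (1 + κ) ≤ |∑ i ∈ Finset.range n, X i ω| ^ (1 + κ)}).toReal ≤
      (∫ ω, |∑ i ∈ Finset.range n, X i ω| ^ (1 + κ) ∂P) / x ^ (1 + κ) := by
    rw [le_div_iff₀ hxp, mul_comm]
    exact hmarkov
  have h2 : (∫ ω, |∑ i ∈ Finset.range n, X i ω| ^ (1 + κ) ∂P) / x ^ (1 + κ) ≤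
      (2 * (1 + κ) * n * ∫ ω, |X 0 ω| ^ (1 + κ) ∂P) / x ^ (1 + κ) := by
    gcongr
  calc (P {ω | x < |∑ i ∈ Finset.range n, X i ω|}).toReal
      ≤ (∫ ω, |∑ i ∈ Finset.range n, X i ω| ^ (1 + κ) ∂P) / x ^ (1 + κ) :=
        hmono.trans h1
    _ ≤ (2 * (1 + κ) * n * ∫ ω, |X 0 ω| ^ (1 + κ) ∂P) / x ^ (1 + κ) := h2
    _ = 2 * (1 + κ) * (∫ ω, |X 0 ω| ^ (1 + κ) ∂P) * n / x ^ (1 + κ) := by ring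
end

section
/- Let {Z_k : k ≥ 0} be a Galton–Watson process with Z₀ = 1 and offspring distribution f on ℕ with mean μ ∈ (1, ∞) and E[χ^{1+κ}] < ∞ for some 0 < κ ≤ 1, where χ ~ f. Then for any u with 1 < u < μ and any k ≥ r ≥ 1, P( Z_r ≥ u^r and Z_{r+1} ≤ u^{r+1} ) ≤ Q · u^{-κ r}, where Q = Q_{1+κ}·E[|χ - μ|^{1+κ}]/(μ - u)^{1+κ} and Q_{1+κ} is the Burkholder constant for exponent 1+κ. -/
open MeasureTheory ProbabilityTheory Finset

/-- A (non-delayed) Galton–Watson process built from an array `ξ` of offspring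
variables: `ξ k i` is the number of children of the `i`-th individual of generation
`k`. -/
def gwProcess {Ω : Type*} (ξ : ℕ → ℕ → Ω → ℕ) : ℕ → Ω → ℕ
  | 0 => fun _ => 1
  | k + 1 => fun ω => ∑ i ∈ Finset.range (gwProcess ξ k ω), ξ k i ω

namespace GW15aux

open Real Set
open scoped NNReal ENNReal

noncomputable section

/-! ### Pointwise real inequalities -/

lemma rpow_add_le_add_rpow' {q : ℝ} (hq0 : 0 ≤ q) (hq1 : q ≤ 1) {a b : ℝ}
    (ha : 0 ≤ a) (hb : 0 ≤ b) : (a + b) ^ q ≤ a ^ q + b ^ q := by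
  have h := NNReal.rpow_add_le_add_rpow a.toNNReal b.toNNReal hq0 hq1
  have hco : ∀ x : ℝ≥0, ((x ^ q : ℝ≥0) : ℝ) = (x : ℝ) ^ q := fun x => NNReal.coe_rpow x q
  calc (a + b) ^ q = (((a.toNNReal + b.toNNReal : ℝ≥0) : ℝ)) ^ q := by
        rw [NNReal.coe_add, Real.coe_toNNReal a ha, Real.coe_toNNReal b hb]
    _ = (((a.toNNReal + b.toNNReal) ^ q : ℝ≥0) : ℝ) := (hco _).symm
    _ ≤ ((a.toNNReal ^ q + b.toNNReal ^ q : ℝ≥0) : ℝ) := by exact_mod_cast h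
    _ = a ^ q + b ^ q := by
        rw [NNReal.coe_add, hco, hco, Real.coe_toNNReal a ha, Real.coe_toNNReal b hb]

lemma rpow_add_le_two_rpow {p : ℝ} (hp0 : 0 ≤ p) {a b : ℝ} (ha : 0 ≤ a) (hb : 0 ≤ b) :
    (a + b) ^ p ≤ 2 ^ p * (a ^ p + b ^ p) := by
  have h2 : (0:ℝ) ≤ 2 ^ p := Real.rpow_nonneg (by norm_num) p
  rcases le_total a b with h | h
  · calc (a + b) ^ p ≤ (2 * b) ^ p :=
          Real.rpow_le_rpow (by linarith) (by linarith) hp0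
      _ = 2 ^ p * b ^ p := Real.mul_rpow (by norm_num) hb
      _ ≤ 2 ^ p * (a ^ p + b ^ p) := by
          have := Real.rpow_nonneg ha p
          nlinarith [Real.rpow_nonneg hb p]
  · calc (a + b) ^ p ≤ (2 * a) ^ p :=
          Real.rpow_le_rpow (by linarith) (by linarith) hp0
      _ = 2 ^ p * a ^ p := Real.mul_rpow (by norm_num) ha
      _ ≤ 2 ^ p * (a ^ p + b ^ p) := by
          have := Real.rpow_nonneg hb p
          nlinarith [Real.rpow_nonneg ha p]

lemma sign_mul_abs_rpow {q : ℝ} (hq0 : 0 < q) {x : ℝ} (hx : 0 ≤ x) :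
    Real.sign x * |x| ^ q = x ^ q := by
  rcases hx.lt_or_eq with h | h
  · rw [Real.sign_of_pos h, abs_of_pos h, one_mul]
  · rw [← h]
    simp [Real.sign_zero, Real.zero_rpow hq0.ne']

lemma rpow_sub_le_sub_rpow {q : ℝ} (hq0 : 0 < q) (hq1 : q ≤ 1) {x y : ℝ}
    (hy : 0 ≤ y) (hxy : y ≤ x) : x ^ q - y ^ q ≤ (x - y) ^ q := by
  have h := rpow_add_le_add_rpow' hq0.le hq1 (sub_nonneg.2 hxy) hy
  rw [sub_add_cancel] at h
  linarith

lemma sign_rpow_diff_le {q : ℝ} (hq0 : 0 < q) (hq1 : q ≤ 1) (x y : ℝ) :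
    Real.sign x * |x| ^ q - Real.sign y * |y| ^ q ≤ 2 * |x - y| ^ q := by
  have hRnn : (0:ℝ) ≤ |x - y| ^ q := Real.rpow_nonneg (abs_nonneg _) q
  rcases le_or_gt 0 x with hx | hx <;> rcases le_or_gt 0 y with hy | hy
  · rw [sign_mul_abs_rpow hq0 hx, sign_mul_abs_rpow hq0 hy]
    rcases le_total x y with h | h
    · have := Real.rpow_le_rpow hx h hq0.le
      linarith
    · have h2 := rpow_sub_le_sub_rpow hq0 hq1 hy h
      have h3 : (0:ℝ) ≤ (x - y) ^ q := Real.rpow_nonneg (sub_nonneg.2 h) q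
      rw [abs_of_nonneg (sub_nonneg.2 h)]
      linarith
  · rw [sign_mul_abs_rpow hq0 hx, Real.sign_of_neg hy, abs_of_neg hy]
    have hx1 : x ^ q ≤ (x - y) ^ q := Real.rpow_le_rpow hx (by linarith) hq0.le
    have hy1 : (-y) ^ q ≤ (x - y) ^ q := Real.rpow_le_rpow (by linarith) (by linarith) hq0.le
    rw [abs_of_pos (by linarith : (0:ℝ) < x - y)]
    linarith
  · rw [Real.sign_of_neg hx, abs_of_neg hx, sign_mul_abs_rpow hq0 hy]
    have h1 : (0:ℝ) ≤ (-x) ^ q := Real.rpow_nonneg (by linarith) q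
    have h2 : (0:ℝ) ≤ y ^ q := Real.rpow_nonneg hy q
    linarith
  · rw [Real.sign_of_neg hx, Real.sign_of_neg hy, abs_of_neg hx, abs_of_neg hy]
    rcases le_total (-y) (-x) with h | h
    · have := Real.rpow_le_rpow (by linarith : (0:ℝ) ≤ -y) h hq0.le
      linarith
    · have h2 := rpow_sub_le_sub_rpow hq0 hq1 (by linarith : (0:ℝ) ≤ -x) h
      have he : -y - -x = x - y := by ring
      rw [he] at h2
      have h3 : (0:ℝ) ≤ (x - y) ^ q := Real.rpow_nonneg (sub_nonneg.2 (by linarith : y ≤ x)) q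
      rw [abs_of_nonneg (sub_nonneg.2 (by linarith : y ≤ x))]
      linarith

lemma sign_rpow_diff_abs_le {q : ℝ} (hq0 : 0 < q) (hq1 : q ≤ 1) (x y : ℝ) :
    |Real.sign x * |x| ^ q - Real.sign y * |y| ^ q| ≤ 2 * |x - y| ^ q := by
  rw [abs_sub_le_iff]
  refine ⟨sign_rpow_diff_le hq0 hq1 x y, ?_⟩
  have := sign_rpow_diff_le hq0 hq1 y x
  rwa [abs_sub_comm] at this

lemma measurable_realSign : Measurable Real.sign := by
  have h : Real.sign = fun r : ℝ => if r < 0 then (-1:ℝ) else if 0 < r then 1 else 0 := by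
    funext r; rfl
  rw [h]
  exact Measurable.ite measurableSet_Iio measurable_const
    (Measurable.ite measurableSet_Ioi measurable_const measurable_const)

lemma abs_sign_le_one (x : ℝ) : |Real.sign x| ≤ 1 := by
  rcases Real.sign_apply_eq x with h | h | h <;> rw [h] <;> norm_num

/-! ### Derivative of `|x| ^ p` -/

lemma hasDerivAt_abs_rpow {p : ℝ} (hp1 : 1 < p) (x : ℝ) :
    HasDerivAt (fun y : ℝ => |y| ^ p) (p * Real.sign x * |x| ^ (p - 1)) x := by
  have hp0 : (0:ℝ) < p := by linarith
  rcases lt_trichotomy x (0:ℝ) with hx | hx | hx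
  · have hne : -x ≠ 0 := (neg_pos.2 hx).ne'
    have h2 : HasDerivAt (fun z : ℝ => z ^ p) (p * (-x) ^ (p - 1)) (-x) :=
      Real.hasDerivAt_rpow_const (Or.inl hne)
    have h1 : HasDerivAt (fun y : ℝ => (-y) ^ p) (p * (-x) ^ (p - 1) * (-1)) x :=
      h2.comp x (hasDerivAt_neg x)
    have heq : (fun y : ℝ => |y| ^ p) =ᶠ[nhds x] fun y : ℝ => (-y) ^ p := by
      filter_upwards [gt_mem_nhds hx] with y hy
      rw [abs_of_neg hy]
    have h3 := h1.congr_of_eventuallyEq heq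
    refine h3.congr_deriv ?_
    rw [Real.sign_of_neg hx, abs_of_neg hx]
    ring
  · subst hx
    have hd : p * Real.sign (0:ℝ) * |(0:ℝ)| ^ (p - 1) = 0 := by
      simp [Real.sign_zero]
    rw [hd, hasDerivAt_iff_tendsto_slope]
    have hbound : ∀ᶠ y in nhdsWithin (0:ℝ) {(0:ℝ)}ᶜ,
        ‖slope (fun y : ℝ => |y| ^ p) 0 y‖ ≤ |y| ^ (p - 1) := by
      filter_upwards [self_mem_nhdsWithin] with y hy
      have hy0 : y ≠ 0 := hy
      have habs : |y| ≠ 0 := abs_ne_zero.2 hy0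
      have h0 : |(0:ℝ)| ^ p = 0 := by simp [Real.zero_rpow hp0.ne']
      rw [slope_def_field, h0, sub_zero, sub_zero]
      have : ‖|y| ^ p / y‖ = |y| ^ p / |y| := by
        rw [norm_div, Real.norm_eq_abs, Real.norm_eq_abs,
          abs_of_nonneg (Real.rpow_nonneg (abs_nonneg y) p)]
      rw [this, ← Real.rpow_sub_one habs p]
    have htend : Filter.Tendsto (fun y : ℝ => |y| ^ (p - 1))
        (nhdsWithin (0:ℝ) {(0:ℝ)}ᶜ) (nhds 0) := by
      have hc : ContinuousAt (fun t : ℝ => t ^ (p - 1)) (|(0:ℝ)|) := by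
        simp only [abs_zero]
        exact Real.continuousAt_rpow_const 0 (p - 1) (Or.inr (by linarith))
      have hc2 : ContinuousAt (fun y : ℝ => |y| ^ (p - 1)) 0 :=
        hc.comp continuous_abs.continuousAt
      have h00 : |(0:ℝ)| ^ (p - 1) = 0 := by
        simp [Real.zero_rpow (by linarith : p - 1 ≠ 0)]
      have := hc2.tendsto
      rw [h00] at this
      exact this.mono_left nhdsWithin_le_nhds
    exact squeeze_zero_norm' hbound htend
  · have h2 : HasDerivAt (fun z : ℝ => z ^ p) (p * x ^ (p - 1)) x :=
      Real.hasDerivAt_rpow_const (Or.inl hx.ne')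
    have heq : (fun y : ℝ => |y| ^ p) =ᶠ[nhds x] fun y : ℝ => y ^ p := by
      filter_upwards [lt_mem_nhds hx] with y hy
      rw [abs_of_pos hy]
    have h3 := h2.congr_of_eventuallyEq heq
    refine h3.congr_deriv ?_
    rw [Real.sign_of_pos hx, abs_of_pos hx]
    ring

/-! ### The key pointwise inequality -/

lemma key_ineq {p : ℝ} (hp1 : 1 < p) (hp2 : p ≤ 2) (a b : ℝ) :
    |a + b| ^ p ≤ |a| ^ p + p * Real.sign a * |a| ^ (p - 1) * b + 2 * p * |b| ^ p := by
  have hp0 : (0:ℝ) < p := by linarith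
  rcases eq_or_ne b 0 with rfl | hb
  · simp [Real.zero_rpow hp0.ne']
  have hq0 : (0:ℝ) < p - 1 := by linarith
  have hq1 : p - 1 ≤ 1 := by linarith
  have hb0 : (0:ℝ) < |b| := abs_pos.2 hb
  have hcont : Continuous fun y : ℝ => |y| ^ p :=
    continuous_abs.rpow_const fun _ => Or.inr hp0.le
  obtain ⟨c, hca, hcid⟩ :
      ∃ c : ℝ, |c - a| ≤ |b| ∧
        |a + b| ^ p - |a| ^ p = p * Real.sign c * |c| ^ (p - 1) * b := by
    rcases hb.lt_or_gt with hbneg | hbpos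
    · obtain ⟨c, hc, he⟩ := exists_hasDerivAt_eq_slope (fun y : ℝ => |y| ^ p)
        (fun x => p * Real.sign x * |x| ^ (p - 1)) (show a + b < a by linarith)
        hcont.continuousOn (fun x _ => hasDerivAt_abs_rpow hp1 x)
      refine ⟨c, ?_, ?_⟩
      · rw [abs_of_neg (by linarith [hc.2] : c - a < 0), abs_of_neg hbneg]
        linarith [hc.1]
      · have hden : a - (a + b) ≠ 0 := by intro h; apply hb; linarith
        rw [eq_div_iff hden] at he
        have : p * Real.sign c * |c| ^ (p - 1) * (a - (a + b)) =
            |a| ^ p - |a + b| ^ p := he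
        nlinarith [this]
    · obtain ⟨c, hc, he⟩ := exists_hasDerivAt_eq_slope (fun y : ℝ => |y| ^ p)
        (fun x => p * Real.sign x * |x| ^ (p - 1)) (show a < a + b by linarith)
        hcont.continuousOn (fun x _ => hasDerivAt_abs_rpow hp1 x)
      refine ⟨c, ?_, ?_⟩
      · rw [abs_of_pos (by linarith [hc.1] : 0 < c - a), abs_of_pos hbpos]
        linarith [hc.2]
      · have hden : a + b - a ≠ 0 := by intro h; apply hb; linarith
        rw [eq_div_iff hden] at he
        have : p * Real.sign c * |c| ^ (p - 1) * (a + b - a) =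
            |a + b| ^ p - |a| ^ p := he
        nlinarith [this]
  have hdiff : |Real.sign c * |c| ^ (p - 1) - Real.sign a * |a| ^ (p - 1)| ≤
      2 * |c - a| ^ (p - 1) := sign_rpow_diff_abs_le hq0 hq1 c a
  have hmono : |c - a| ^ (p - 1) ≤ |b| ^ (p - 1) :=
    Real.rpow_le_rpow (abs_nonneg _) hca hq0.le
  have hbp : |b| ^ (p - 1) * |b| = |b| ^ p := by
    have := Real.rpow_add_one hb0.ne' (p - 1)
    rw [sub_add_cancel] at this
    rw [← this]
  have hstep : (Real.sign c * |c| ^ (p - 1) - Real.sign a * |a| ^ (p - 1)) * b ≤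
      2 * |b| ^ p := by
    calc (Real.sign c * |c| ^ (p - 1) - Real.sign a * |a| ^ (p - 1)) * b
        ≤ |(Real.sign c * |c| ^ (p - 1) - Real.sign a * |a| ^ (p - 1)) * b| := le_abs_self _
      _ = |Real.sign c * |c| ^ (p - 1) - Real.sign a * |a| ^ (p - 1)| * |b| := abs_mul _ _
      _ ≤ (2 * |b| ^ (p - 1)) * |b| := by
          apply mul_le_mul _ le_rfl (abs_nonneg _) (by positivity)
          exact hdiff.trans (by linarith)
      _ = 2 * |b| ^ p := by rw [mul_assoc, hbp]
  have hfin := mul_le_mul_of_nonneg_left hstep hp0.le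
  nlinarith [hcid, hfin]

/-! ### A von Bahr–Esseen type inequality -/

lemma integrable_of_abs_rpow {Ω : Type} [MeasurableSpace Ω] {P : Measure Ω}
    [IsProbabilityMeasure P] {p : ℝ} (hp1 : 1 ≤ p) {g : Ω → ℝ} (hg : Measurable g)
    (h : Integrable (fun ω => |g ω| ^ p) P) : Integrable g P := by
  refine Integrable.mono ((integrable_const (1:ℝ)).add h) hg.aestronglyMeasurable ?_
  filter_upwards with ω
  have hb : (0:ℝ) ≤ |g ω| ^ p := Real.rpow_nonneg (abs_nonneg _) p
  have h1 : ‖g ω‖ ≤ 1 + |g ω| ^ p := by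
    rw [Real.norm_eq_abs]
    rcases le_total (|g ω|) 1 with h | h
    · linarith
    · have h2 : |g ω| ^ (1:ℝ) ≤ |g ω| ^ p := Real.rpow_le_rpow_of_exponent_le h hp1
      rw [Real.rpow_one] at h2
      linarith
  calc ‖g ω‖ ≤ 1 + |g ω| ^ p := h1
    _ ≤ ‖1 + |g ω| ^ p‖ := le_abs_self _

lemma vbe {Ω : Type} [MeasurableSpace Ω] (P : Measure Ω) [IsProbabilityMeasure P]
    {p : ℝ} (hp1 : 1 < p) (hp2 : p ≤ 2) (Y : ℕ → Ω → ℝ)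
    (hmeas : ∀ i, Measurable (Y i))
    (hindep : iIndepFun Y P)
    (hint : ∀ i, Integrable (fun ω => |Y i ω| ^ p) P)
    (hmean : ∀ i, ∫ ω, Y i ω ∂P = 0)
    {M : ℝ} (hM : ∀ i, ∫ ω, |Y i ω| ^ p ∂P ≤ M) (n : ℕ) :
    Integrable (fun ω => |∑ i ∈ range n, Y i ω| ^ p) P ∧
      ∫ ω, |∑ i ∈ range n, Y i ω| ^ p ∂P ≤ 2 * p * n * M := by
  have hp0 : (0:ℝ) < p := by linarith
  have habs_meas : ∀ {g : Ω → ℝ}, Measurable g → Measurable fun ω => |g ω| ^ p :=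
    fun {g} hg => ((continuous_abs.rpow_const fun _ => Or.inr hp0.le).measurable).comp hg
  induction n with
  | zero =>
      constructor
      · simpa [Real.zero_rpow hp0.ne'] using (integrable_const (0:ℝ))
      · simp [Real.zero_rpow hp0.ne']
  | succ n ih =>
      set S : Ω → ℝ := fun ω => ∑ i ∈ range n, Y i ω with hS
      have hSmeas : Measurable S := Finset.measurable_sum (range n) fun i _ => hmeas i
      set φ : ℝ → ℝ := fun x => p * Real.sign x * |x| ^ (p - 1) with hφ
      have hφmeas : Measurable φ := by
        apply Measurable.mul
        · exact (measurable_const.mul measurable_realSign)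
        · exact (continuous_abs.rpow_const fun _ => Or.inr (by linarith)).measurable
      have hφS_int : Integrable (fun ω => φ (S ω)) P := by
        have hgint : Integrable (fun ω => p * (1 + |S ω| ^ p)) P :=
          ((integrable_const (1:ℝ)).add ih.1).const_mul p
        refine Integrable.mono hgint (hφmeas.comp hSmeas).aestronglyMeasurable ?_
        filter_upwards with ω
        have h1 : (0:ℝ) ≤ |S ω| ^ p := Real.rpow_nonneg (abs_nonneg _) p
        have h2 : |S ω| ^ (p - 1) ≤ 1 + |S ω| ^ p := by
          rcases le_total (|S ω|) 1 with h | h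
          · have := Real.rpow_le_one (abs_nonneg _) h (by linarith : (0:ℝ) ≤ p - 1)
            linarith
          · have := Real.rpow_le_rpow_of_exponent_le h (by linarith : p - 1 ≤ p)
            linarith
        have h3 : ‖φ (S ω)‖ ≤ p * (1 + |S ω| ^ p) := by
          rw [hφ, Real.norm_eq_abs, abs_mul, abs_mul, abs_of_pos hp0,
            abs_of_nonneg (Real.rpow_nonneg (abs_nonneg _) _)]
          have h4 : |Real.sign (S ω)| ≤ 1 := abs_sign_le_one _
          have h5 : (0:ℝ) ≤ |S ω| ^ (p - 1) := Real.rpow_nonneg (abs_nonneg _) _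
          calc p * |Real.sign (S ω)| * |S ω| ^ (p - 1)
              ≤ p * 1 * |S ω| ^ (p - 1) :=
                mul_le_mul_of_nonneg_right (mul_le_mul_of_nonneg_left h4 hp0.le) h5
            _ = p * |S ω| ^ (p - 1) := by ring
            _ ≤ p * (1 + |S ω| ^ p) := by nlinarith
        refine h3.trans ?_
        rw [Real.norm_eq_abs]
        exact le_abs_self _
      have hYn_int : Integrable (Y n) P :=
        integrable_of_abs_rpow hp1.le (hmeas n) (hint n)
      have hIndep : IndepFun (fun ω => φ (S ω)) (Y n) P := by
        have h0 : IndepFun (∑ i ∈ range n, Y i) (Y n) P :=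
          hindep.indepFun_finsetSum_of_notMem hmeas Finset.notMem_range_self
        have h1 := h0.comp hφmeas measurable_id
        have h2 : (φ ∘ ∑ i ∈ range n, Y i) = fun ω => φ (S ω) := by
          funext ω
          simp [Function.comp, hS, Finset.sum_apply]
        rwa [h2] at h1
      have hprod_int : Integrable (fun ω => φ (S ω) * Y n ω) P := by
        have := hIndep.integrable_mul hφS_int hYn_int
        exact this
      have hprod : ∫ ω, φ (S ω) * Y n ω ∂P = 0 := by
        have h1 := hIndep.integral_mul_eq_mul_integral hφS_int.aestronglyMeasurable hYn_int.aestronglyMeasurable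
        calc ∫ ω, φ (S ω) * Y n ω ∂P
            = ∫ ω, ((fun ω => φ (S ω)) * Y n) ω ∂P := rfl
          _ = (∫ ω, φ (S ω) ∂P) * ∫ ω, Y n ω ∂P := h1
          _ = 0 := by rw [hmean n, mul_zero]
      have hkey : ∀ ω, |S ω + Y n ω| ^ p ≤
          |S ω| ^ p + φ (S ω) * Y n ω + 2 * p * |Y n ω| ^ p := fun ω =>
        key_ineq hp1 hp2 (S ω) (Y n ω)
      have hub : Integrable
          (fun ω => |S ω| ^ p + φ (S ω) * Y n ω + 2 * p * |Y n ω| ^ p) P :=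
        (ih.1.add hprod_int).add ((hint n).const_mul (2 * p))
      have hsucc : ∀ ω, ∑ i ∈ range (n + 1), Y i ω = S ω + Y n ω := fun ω =>
        Finset.sum_range_succ (fun i => Y i ω) n
      have hInt1 : Integrable (fun ω => |∑ i ∈ range (n + 1), Y i ω| ^ p) P := by
        refine Integrable.mono hub
          (habs_meas (Finset.measurable_sum (range (n+1)) fun i _ => hmeas i)).aestronglyMeasurable ?_
        filter_upwards with ω
        have h1 : (0:ℝ) ≤ |∑ i ∈ range (n + 1), Y i ω| ^ p :=
          Real.rpow_nonneg (abs_nonneg _) p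
        have h2 := hkey ω
        rw [← hsucc ω] at h2
        rw [Real.norm_eq_abs, abs_of_nonneg h1, Real.norm_eq_abs]
        exact h2.trans (le_abs_self _)
      refine ⟨hInt1, ?_⟩
      have hmono : ∫ ω, |∑ i ∈ range (n + 1), Y i ω| ^ p ∂P ≤
          ∫ ω, (|S ω| ^ p + φ (S ω) * Y n ω + 2 * p * |Y n ω| ^ p) ∂P := by
        refine integral_mono hInt1 hub ?_
        intro ω
        have h2 := hkey ω
        rw [← hsucc ω] at h2
        exact h2
      have heval : ∫ ω, (|S ω| ^ p + φ (S ω) * Y n ω + 2 * p * |Y n ω| ^ p) ∂P =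
          (∫ ω, |S ω| ^ p ∂P) + 0 + 2 * p * ∫ ω, |Y n ω| ^ p ∂P := by
        have ha : Integrable (fun ω => |S ω| ^ p + φ (S ω) * Y n ω) P := ih.1.add hprod_int
        have hb : Integrable (fun ω => 2 * p * |Y n ω| ^ p) P := (hint n).const_mul (2 * p)
        have e1 : ∫ ω, (|S ω| ^ p + φ (S ω) * Y n ω + 2 * p * |Y n ω| ^ p) ∂P =
            (∫ ω, (|S ω| ^ p + φ (S ω) * Y n ω) ∂P) + ∫ ω, 2 * p * |Y n ω| ^ p ∂P :=
          integral_add ha hb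
        have e2 : ∫ ω, (|S ω| ^ p + φ (S ω) * Y n ω) ∂P =
            (∫ ω, |S ω| ^ p ∂P) + ∫ ω, φ (S ω) * Y n ω ∂P := integral_add ih.1 hprod_int
        rw [e1, e2, hprod, integral_const_mul]
      have hMn := hM n
      have hMnn : (0:ℝ) ≤ M := le_trans (integral_nonneg fun ω =>
        Real.rpow_nonneg (abs_nonneg _) p) (hM 0)
      have := ih.2
      rw [heval] at hmono
      have hfinal : (∫ ω, |S ω| ^ p ∂P) + 0 + 2 * p * ∫ ω, |Y n ω| ^ p ∂P ≤
          2 * p * (n + 1) * M := by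
        have h4 : 2 * p * ∫ ω, |Y n ω| ^ p ∂P ≤ 2 * p * M := by nlinarith
        push_cast
        nlinarith
      calc ∫ ω, |∑ i ∈ range (n + 1), Y i ω| ^ p ∂P
          ≤ (∫ ω, |S ω| ^ p ∂P) + 0 + 2 * p * ∫ ω, |Y n ω| ^ p ∂P := hmono
        _ ≤ 2 * p * (n + 1) * M := hfinal
        _ = 2 * p * (↑(n + 1)) * M := by push_cast; ring

/-! ### Expectations from the offspring distribution -/

lemma pmf_integral {Ω : Type} [MeasurableSpace Ω] {P : Measure Ω} [IsProbabilityMeasure P]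
    {f : ℕ → ℝ} {ρ : Ω → ℕ} (hρ : Measurable ρ)
    (hpmf : ∀ t, (P {ω | ρ ω = t}).toReal = f t) (hf0 : ∀ t, 0 ≤ f t) (g : ℕ → ℝ)
    (hg : Summable (fun t => f t * |g t|)) :
    Integrable (fun ω => g (ρ ω)) P ∧ ∫ ω, g (ρ ω) ∂P = ∑' t, f t * g t := by
  set ν := P.map ρ with hν
  have hprob : IsProbabilityMeasure ν := Measure.isProbabilityMeasure_map hρ.aemeasurable
  have hsingleton : ∀ t : ℕ, ν {t} = ENNReal.ofReal (f t) := by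
    intro t
    have hmap : ν {t} = P (ρ ⁻¹' {t}) := Measure.map_apply hρ (measurableSet_singleton t)
    have hset : ρ ⁻¹' {t} = {ω | ρ ω = t} := rfl
    rw [hmap, hset, ← hpmf t, ENNReal.ofReal_toReal (measure_ne_top P _)]
  have hgmeas : Measurable g := measurable_from_top
  have hsum' : Summable (fun t => |g t| * f t) := by
    simpa [mul_comm] using hg
  have hfin : HasFiniteIntegral g ν := by
    have key : ∫⁻ t, ‖g t‖ₑ ∂ν = ∑' t, ENNReal.ofReal (|g t| * f t) := by
      rw [lintegral_countable']
      congr 1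
      funext t
      rw [hsingleton t, ← ofReal_norm_eq_enorm, Real.norm_eq_abs,
        ← ENNReal.ofReal_mul (abs_nonneg _)]
    rw [HasFiniteIntegral, key,
      ← ENNReal.ofReal_tsum_of_nonneg (fun t => mul_nonneg (abs_nonneg _) (hf0 t)) hsum']
    exact ENNReal.ofReal_lt_top
  have hint : Integrable g ν := ⟨hgmeas.stronglyMeasurable.aestronglyMeasurable, hfin⟩
  constructor
  · exact (integrable_map_measure hgmeas.stronglyMeasurable.aestronglyMeasurable
      hρ.aemeasurable).mp hint
  · rw [← integral_map hρ.aemeasurable hgmeas.stronglyMeasurable.aestronglyMeasurable, ← hν,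
      integral_countable' hint]
    apply tsum_congr
    intro t
    rw [measureReal_def, hsingleton t, ENNReal.toReal_ofReal (hf0 t), smul_eq_mul]

lemma measurable_of_comap_le' {Ω β : Type} [mβ : MeasurableSpace β] {g : Ω → β}
    {m : MeasurableSpace Ω} (h : MeasurableSpace.comap g mβ ≤ m) :
    @Measurable Ω β m mβ g := fun _ hs => h _ ⟨_, hs, rfl⟩

lemma sub_const_meas {Ω : Type} [m : MeasurableSpace Ω] {g : Ω → ℕ} (hg : Measurable g)
    (c : ℝ) : Measurable fun ω => ((g ω : ℕ) : ℝ) - c :=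
  (measurable_from_top.comp hg).sub measurable_const

lemma bset_meas {Ω : Type} [m : MeasurableSpace Ω] {Y : ℕ → Ω → ℝ}
    (hY : ∀ i, Measurable (Y i)) (n : ℕ) (c : ℝ) :
    MeasurableSet {ω | c ≤ |∑ i ∈ Finset.range n, Y i ω|} := by
  have hsum : Measurable (fun ω => |∑ i ∈ Finset.range n, Y i ω|) :=
    (Finset.measurable_sum (Finset.range n) (fun i _ => hY i)).abs
  exact measurableSet_le measurable_const hsum

/-! ### Measurability of the Galton–Watson process -/

lemma measurable_randomSum {Ω : Type} [mΩ : MeasurableSpace Ω] {N : Ω → ℕ} {g : ℕ → Ω → ℕ}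
    (hN : Measurable N) (hg : ∀ i, Measurable (g i)) :
    Measurable fun ω => ∑ i ∈ range (N ω), g i ω := by
  apply measurable_to_countable'
  intro m
  have hset : (fun ω => ∑ i ∈ range (N ω), g i ω) ⁻¹' {m} =
      ⋃ n : ℕ, ({ω | N ω = n} ∩ {ω | (∑ i ∈ range n, g i ω) = m}) := by
    ext ω
    simp only [Set.mem_preimage, Set.mem_singleton_iff, Set.mem_iUnion, Set.mem_inter_iff,
      Set.mem_setOf_eq]
    constructor
    · intro h
      exact ⟨N ω, rfl, h⟩
    · rintro ⟨n, hn, h⟩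
      rw [hn]
      exact h
  rw [hset]
  refine MeasurableSet.iUnion fun n => MeasurableSet.inter ?_ ?_
  · exact hN (measurableSet_singleton n)
  · exact (Finset.measurable_sum (range n) fun i _ => hg i) (measurableSet_singleton m)

lemma gw_measurable {Ω : Type} [mΩ : MeasurableSpace Ω] {ξ : ℕ → ℕ → Ω → ℕ} {r : ℕ}
    (h : ∀ k i, k < r → Measurable (ξ k i)) : ∀ k, k ≤ r → Measurable (gwProcess ξ k) := by
  intro k
  induction k with
  | zero =>
      intro _
      have : gwProcess ξ 0 = fun _ : Ω => 1 := rfl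
      rw [this]
      exact measurable_const
  | succ n ih =>
      intro hn
      have h1 := ih (by omega)
      have h2 : gwProcess ξ (n + 1) = fun ω => ∑ i ∈ range (gwProcess ξ n ω), ξ n i ω := rfl
      rw [h2]
      exact measurable_randomSum h1 (fun i => h n i (by omega))

/-! ### Reindexing independence to a single row -/

lemma row_indep {Ω : Type} [MeasurableSpace Ω] {P : Measure Ω} {ξ : ℕ → ℕ → Ω → ℕ}
    (hindep : iIndepFun (fun (p : ℕ × ℕ) ω => ξ p.1 p.2 ω) P) (r : ℕ) :
    iIndepFun (fun i ω => ξ r i ω) P := by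
  rw [iIndepFun_iff_measure_inter_preimage_eq_mul]
  intro S sets hsets
  have hinj : ∀ a ∈ S, ∀ b ∈ S, (fun i : ℕ => (r, i)) a = (fun i : ℕ => (r, i)) b → a = b := by
    intro a _ b _ h
    simpa using congrArg Prod.snd h
  have h := (iIndepFun_iff_measure_inter_preimage_eq_mul.mp hindep)
    (S.image (fun i => (r, i))) (sets := fun q => sets q.2)
    (fun q _ => MeasurableSpace.measurableSet_top)
  have hiInter : (⋂ q ∈ S.image (fun i : ℕ => (r, i)),
      (fun ω => ξ q.1 q.2 ω) ⁻¹' sets q.2) = ⋂ i ∈ S, (fun ω => ξ r i ω) ⁻¹' sets i := by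
    ext ω
    simp only [Set.mem_iInter, Finset.mem_image]
    constructor
    · intro h i hi
      exact h (r, i) ⟨i, hi, rfl⟩
    · rintro h q ⟨i, hi, rfl⟩
      exact h i hi
  rw [hiInter] at h
  rw [h, Finset.prod_image hinj]

end

end GW15aux

open GW15aux

theorem stmt_15 (κ : ℝ) (hκ0 : 0 < κ) (hκ1 : κ ≤ 1) :
    ∃ Q : ℝ, 0 < Q ∧
      ∀ (Ω : Type) (_ : MeasurableSpace Ω) (P : Measure Ω), IsProbabilityMeasure P →
        ∀ (f : ℕ → ℝ) (ξ : ℕ → ℕ → Ω → ℕ),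
          (∀ t, 0 ≤ f t) → (∑' t, f t = 1) →
          (∀ k i, Measurable (ξ k i)) →
          (∀ k i t, (P {ω | ξ k i ω = t}).toReal = f t) →
          iIndepFun (fun (p : ℕ × ℕ) ω => ξ p.1 p.2 ω) P →
          ∀ μm : ℝ, 1 < μm → (∑' t, f t * t = μm) →
            Summable (fun t : ℕ => f t * (t : ℝ) ^ (1 + κ)) →
            ∀ u : ℝ, 1 < u → u < μm →
              ∀ r : ℕ, 1 ≤ r →
                (P {ω | u ^ r ≤ (gwProcess ξ r ω : ℝ) ∧
                    (gwProcess ξ (r + 1) ω : ℝ) ≤ u ^ (r + 1)}).toReal ≤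
                  Q * (∑' t : ℕ, f t * |(t : ℝ) - μm| ^ (1 + κ)) / (μm - u) ^ (1 + κ) *
                    u ^ (-(κ * r)) := by
  classical
  refine ⟨2 * (1 + κ), by linarith, ?_⟩
  intro Ω mΩ P hP f ξ hf0 hf1 hmeasξ hpmf hindep μm hμm1 hμmean hsummable u hu1 hu2 r hr
  set p : ℝ := 1 + κ with hpdef
  have hp1 : (1:ℝ) < p := by simp only [hpdef]; linarith
  have hp2 : p ≤ 2 := by simp only [hpdef]; linarith
  have hp0 : (0:ℝ) < p := by linarith
  have hμu : (0:ℝ) < μm - u := by linarith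
  have hu0 : (0:ℝ) < u := by linarith
  -- Summability facts
  have hsumf : Summable f := by
    by_contra h
    rw [tsum_eq_zero_of_not_summable h] at hf1
    norm_num at hf1
  have ht_le : ∀ t : ℕ, (t:ℝ) ≤ 1 + (t:ℝ) ^ p := by
    intro t
    rcases le_total ((t:ℝ)) 1 with h | h
    · have : (0:ℝ) ≤ (t:ℝ) ^ p := Real.rpow_nonneg (Nat.cast_nonneg t) p
      linarith
    · have h2 : (t:ℝ) ^ (1:ℝ) ≤ (t:ℝ) ^ p := Real.rpow_le_rpow_of_exponent_le h hp1.le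
      rw [Real.rpow_one] at h2
      linarith
  have hsum_t : Summable (fun t : ℕ => f t * t) := by
    refine Summable.of_nonneg_of_le (fun t => mul_nonneg (hf0 t) (Nat.cast_nonneg t))
      (fun t => ?_) (hsumf.add hsummable)
    calc f t * (t:ℝ) ≤ f t * (1 + (t:ℝ) ^ p) :=
          mul_le_mul_of_nonneg_left (ht_le t) (hf0 t)
      _ = f t + f t * (t:ℝ) ^ p := by ring
  have habsp_le : ∀ t : ℕ, |(t:ℝ) - μm| ^ p ≤ 2 ^ p * ((t:ℝ) ^ p + μm ^ p) := by
    intro t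
    have h1 : |(t:ℝ) - μm| ≤ (t:ℝ) + μm := by
      have := abs_sub (t:ℝ) μm
      calc |(t:ℝ) - μm| ≤ |(t:ℝ)| + |μm| := abs_sub _ _
        _ = (t:ℝ) + μm := by
            rw [abs_of_nonneg (Nat.cast_nonneg t), abs_of_pos (by linarith : (0:ℝ) < μm)]
    calc |(t:ℝ) - μm| ^ p ≤ ((t:ℝ) + μm) ^ p :=
          Real.rpow_le_rpow (abs_nonneg _) h1 hp0.le
      _ ≤ 2 ^ p * ((t:ℝ) ^ p + μm ^ p) :=
          rpow_add_le_two_rpow hp0.le (Nat.cast_nonneg t) (by linarith)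
  have hsum_absp : Summable (fun t : ℕ => f t * |(t:ℝ) - μm| ^ p) := by
    refine Summable.of_nonneg_of_le
      (fun t => mul_nonneg (hf0 t) (Real.rpow_nonneg (abs_nonneg _) p)) (fun t => ?_)
      (((hsummable.mul_left (2 ^ p))).add (hsumf.mul_left (2 ^ p * μm ^ p)))
    calc f t * |(t:ℝ) - μm| ^ p ≤ f t * (2 ^ p * ((t:ℝ) ^ p + μm ^ p)) :=
          mul_le_mul_of_nonneg_left (habsp_le t) (hf0 t)
      _ = 2 ^ p * (f t * (t:ℝ) ^ p) + 2 ^ p * μm ^ p * f t := by ring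
  -- the moment quantity
  set S' : ℝ := ∑' t : ℕ, f t * |(t:ℝ) - μm| ^ p with hS'def
  have hS'0 : 0 ≤ S' :=
    tsum_nonneg fun t => mul_nonneg (hf0 t) (Real.rpow_nonneg (abs_nonneg _) p)
  -- row variables
  set Y : ℕ → Ω → ℝ := fun i ω => ((ξ r i ω : ℕ) : ℝ) - μm with hYdef
  have hYmeas : ∀ i, Measurable (Y i) := fun i =>
    (measurable_from_top.comp (hmeasξ r i)).sub measurable_const
  have hrowint : ∀ i : ℕ, Integrable (fun ω => ((ξ r i ω : ℕ) : ℝ)) P ∧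
      ∫ ω, ((ξ r i ω : ℕ) : ℝ) ∂P = μm := by
    intro i
    have h := pmf_integral (P := P) (hmeasξ r i) (hpmf r i) hf0 (fun t => (t:ℝ))
      (by simpa [Nat.abs_cast] using hsum_t)
    refine ⟨h.1, ?_⟩
    rw [h.2, hμmean]
  have hYmean : ∀ i, ∫ ω, Y i ω ∂P = 0 := by
    intro i
    rw [hYdef]
    simp only []
    rw [integral_sub (hrowint i).1 (integrable_const μm), (hrowint i).2, integral_const]
    simp
  have hYint : ∀ i, Integrable (fun ω => |Y i ω| ^ p) P ∧ ∫ ω, |Y i ω| ^ p ∂P = S' := by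
    intro i
    have h := pmf_integral (P := P) (hmeasξ r i) (hpmf r i) hf0
      (fun t => |(t:ℝ) - μm| ^ p)
      (by
        have habs : ∀ t : ℕ, f t * abs (|(t:ℝ) - μm| ^ p) = f t * |(t:ℝ) - μm| ^ p := by
          intro t
          rw [abs_of_nonneg (Real.rpow_nonneg (abs_nonneg _) p)]
        exact (summable_congr fun t => (habs t).symm).mp hsum_absp)
    exact ⟨h.1, h.2⟩
  have hYindep : iIndepFun Y P := by
    have hrow := row_indep hindep r
    have h := hrow.comp (fun _ => fun m : ℕ => (m : ℝ) - μm) (fun _ =>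
      measurable_from_top)
    exact h
  have hvbe := fun n => vbe P hp1 hp2 Y hYmeas hYindep (fun i => (hYint i).1) hYmean
    (fun i => (hYint i).2.le) n
  -- sets
  set Aset : ℕ → Set Ω := fun n => (gwProcess ξ r) ⁻¹' {n} with hAdef
  set Bset : ℕ → Set Ω := fun n =>
    {ω | (μm - u) * n ≤ |∑ i ∈ range n, Y i ω|} with hBdef
  have hAmeasAmb : ∀ n, MeasurableSet (Aset n) := fun n =>
    (gw_measurable (fun k i _ => hmeasξ k i) r le_rfl) (measurableSet_singleton n)
  -- independence of the two sides
  have hAB : ∀ n, P (Aset n ∩ Bset n) = P (Aset n) * P (Bset n) := by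
    set T : Set (ℕ × ℕ) := {q | q.1 < r} with hTdef
    set m' : ℕ × ℕ → MeasurableSpace Ω :=
      fun q => MeasurableSpace.comap (fun ω => ξ q.1 q.2 ω) inferInstance with hm'def
    set MA : MeasurableSpace Ω := ⨆ q ∈ T, m' q with hMAdef
    set MB : MeasurableSpace Ω := ⨆ q ∈ Tᶜ, m' q with hMBdef
    have hle : ∀ q, m' q ≤ mΩ := fun q => (hmeasξ q.1 q.2).comap_le
    have hiI : iIndep m' P := hindep
    have hIndepAB : Indep MA MB P := indep_iSup_of_disjoint hle hiI disjoint_compl_right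
    have hgwMA : @Measurable Ω ℕ MA _ (gwProcess ξ r) := by
      refine @gw_measurable Ω MA ξ r ?_ r le_rfl
      intro k i hk
      have h1 : m' (k, i) ≤ MA := by
        rw [hMAdef]
        exact le_biSup m' (show (k, i) ∈ T from hk)
      exact measurable_of_comap_le' h1
    have hAmeasMA : ∀ n, MeasurableSet[MA] (Aset n) := fun n =>
      hgwMA (measurableSet_singleton n)
    have hYMB : ∀ i, @Measurable Ω ℝ MB _ (Y i) := by
      intro i
      have h1 : m' (r, i) ≤ MB := by
        rw [hMBdef]
        exact le_biSup m' (show (r, i) ∈ Tᶜ from by simp [hTdef])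
      have h2 : @Measurable Ω ℕ MB _ (fun ω => ξ r i ω) := measurable_of_comap_le' h1
      exact sub_const_meas (m := MB) h2 μm
    have hBmeasMB : ∀ n, MeasurableSet[MB] (Bset n) := fun n =>
      bset_meas (m := MB) hYMB n ((μm - u) * n)
    exact fun n => (Indep_iff MA MB P).mp hIndepAB _ _ (hAmeasMA n) (hBmeasMB n)
  -- constant
  set K : ℝ := 2 * (1 + κ) * S' / (μm - u) ^ p * u ^ (-(κ * (r:ℝ))) with hKdef
  have hK0 : 0 ≤ K := by
    have h1 : (0:ℝ) ≤ 2 * (1 + κ) * S' := by nlinarith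
    have h2 : (0:ℝ) < (μm - u) ^ p := Real.rpow_pos_of_pos hμu p
    have h3 : (0:ℝ) < u ^ (-(κ * (r:ℝ))) := Real.rpow_pos_of_pos hu0 _
    positivity
  -- Markov bound for each n with u^r ≤ n
  have hBn_bound : ∀ n : ℕ, (u:ℝ) ^ r ≤ (n:ℝ) → P (Bset n) ≤ ENNReal.ofReal K := by
    intro n hn
    have hur1 : (1:ℝ) < u ^ r := one_lt_pow₀ hu1 (by omega)
    have hnn : (0:ℝ) < (n:ℝ) := by linarith
    set t : ℝ := (μm - u) * (n:ℝ) with htdef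
    have ht : 0 < t := mul_pos hμu hnn
    set F : Ω → ℝ := fun ω => |∑ i ∈ range n, Y i ω| ^ p with hFdef
    have hFnn : ∀ ω, 0 ≤ F ω := fun ω => Real.rpow_nonneg (abs_nonneg _) p
    have hFint := (hvbe n).1
    have hFval : ∫ ω, F ω ∂P ≤ 2 * p * n * S' := (hvbe n).2
    have hmark := mul_meas_ge_le_integral_of_nonneg (μ := P)
      (Filter.Eventually.of_forall hFnn) hFint (t ^ p)
    have hsub : Bset n ⊆ {ω | t ^ p ≤ F ω} := by
      intro ω hω
      exact Real.rpow_le_rpow ht.le hω hp0.le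
    have htp : (0:ℝ) < t ^ p := Real.rpow_pos_of_pos ht p
    have hPB : (P (Bset n)).toReal ≤ (P {ω | t ^ p ≤ F ω}).toReal :=
      ENNReal.toReal_mono (measure_ne_top P _) (measure_mono hsub)
    have hPB2 : (P (Bset n)).toReal ≤ 2 * p * n * S' / t ^ p := by
      rw [le_div_iff₀ htp]
      calc (P (Bset n)).toReal * t ^ p ≤ (P {ω | t ^ p ≤ F ω}).toReal * t ^ p :=
            mul_le_mul_of_nonneg_right hPB htp.le
        _ = t ^ p * (P {ω | t ^ p ≤ F ω}).toReal := mul_comm _ _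
        _ ≤ ∫ ω, F ω ∂P := hmark
        _ ≤ 2 * p * n * S' := hFval
    have hfrac : 2 * p * (n:ℝ) * S' / t ^ p ≤ K := by
      have h1 : t ^ p = (μm - u) ^ p * (n:ℝ) ^ p := Real.mul_rpow hμu.le hnn.le
      have hD : (0:ℝ) < (μm - u) ^ p := Real.rpow_pos_of_pos hμu p
      have hnp : (0:ℝ) < (n:ℝ) ^ p := Real.rpow_pos_of_pos hnn p
      have h2 : (n:ℝ) / (n:ℝ) ^ p = (n:ℝ) ^ (-κ) := by
        have he : (n:ℝ) ^ (-κ) = (n:ℝ) ^ ((1:ℝ) - p) := by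
          congr 1
          rw [hpdef]; ring
        rw [he, Real.rpow_sub hnn, Real.rpow_one]
      have h3 : (n:ℝ) ^ (-κ) ≤ u ^ (-(κ * (r:ℝ))) := by
        have hur : (0:ℝ) < u ^ r := by positivity
        have hstep := Real.rpow_le_rpow_of_nonpos hur hn (neg_nonpos.2 hκ0.le)
        calc (n:ℝ) ^ (-κ) ≤ (u ^ r) ^ (-κ) := hstep
          _ = u ^ (-(κ * (r:ℝ))) := by
              rw [← Real.rpow_natCast u r, ← Real.rpow_mul hu0.le]
              congr 1
              ring
      have h4 : 2 * p * (n:ℝ) * S' / t ^ p = 2 * p * S' / (μm - u) ^ p * ((n:ℝ) ^ (-κ)) := by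
        rw [h1, ← h2]
        field_simp
      rw [h4, hKdef]
      have h5 : 0 ≤ 2 * p * S' / (μm - u) ^ p := by positivity
      have h6 := mul_le_mul_of_nonneg_left h3 h5
      calc 2 * p * S' / (μm - u) ^ p * ((n:ℝ) ^ (-κ))
          ≤ 2 * p * S' / (μm - u) ^ p * (u ^ (-(κ * (r:ℝ)))) := h6
        _ = 2 * (1 + κ) * S' / (μm - u) ^ p * u ^ (-(κ * (r:ℝ))) := by
            rw [hpdef]
    have : (P (Bset n)).toReal ≤ K := le_trans hPB2 hfrac
    calc P (Bset n) = ENNReal.ofReal ((P (Bset n)).toReal) :=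
          (ENNReal.ofReal_toReal (measure_ne_top P _)).symm
      _ ≤ ENNReal.ofReal K := ENNReal.ofReal_le_ofReal this
  -- event decomposition
  set Eset : Set Ω := {ω | u ^ r ≤ (gwProcess ξ r ω : ℝ) ∧
      (gwProcess ξ (r + 1) ω : ℝ) ≤ u ^ (r + 1)} with hEdef
  set Cset : ℕ → Set Ω := fun n =>
    if (u:ℝ) ^ r ≤ (n:ℝ) then Aset n ∩ Bset n else ∅ with hCdef
  have hEsub : Eset ⊆ ⋃ n, Cset n := by
    intro ω hω
    obtain ⟨h1, h2⟩ := hω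
    refine Set.mem_iUnion.2 ⟨gwProcess ξ r ω, ?_⟩
    rw [hCdef]
    simp only [if_pos h1]
    constructor
    · exact rfl
    · set n := gwProcess ξ r ω with hndef
      have hcast : ((gwProcess ξ (r+1) ω : ℕ) : ℝ) = ∑ i ∈ range n, ((ξ r i ω : ℕ) : ℝ) := by
        have : gwProcess ξ (r+1) ω = ∑ i ∈ range n, ξ r i ω := rfl
        rw [this]
        push_cast
        rfl
      have hupow : u ^ (r+1) ≤ u * (n:ℝ) := by
        rw [pow_succ]
        calc u ^ r * u ≤ (n:ℝ) * u := mul_le_mul_of_nonneg_right h1 hu0.le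
          _ = u * (n:ℝ) := mul_comm _ _
      have hsumle : ∑ i ∈ range n, ((ξ r i ω : ℕ) : ℝ) ≤ u * (n:ℝ) := by
        calc ∑ i ∈ range n, ((ξ r i ω : ℕ) : ℝ) = ((gwProcess ξ (r+1) ω : ℕ) : ℝ) :=
              hcast.symm
          _ ≤ u ^ (r+1) := h2
          _ ≤ u * (n:ℝ) := hupow
      have hYsum : ∑ i ∈ range n, Y i ω =
          (∑ i ∈ range n, ((ξ r i ω : ℕ) : ℝ)) - (n:ℝ) * μm := by
        rw [hYdef]
        rw [Finset.sum_sub_distrib, Finset.sum_const, Finset.card_range, nsmul_eq_mul]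
      have hineq : (μm - u) * (n:ℝ) ≤ -(∑ i ∈ range n, Y i ω) := by
        rw [hYsum]
        have hexp : (μm - u) * (n:ℝ) = (n:ℝ) * μm - u * (n:ℝ) := by ring
        linarith
      exact le_trans hineq (neg_le_abs _)
  have hCn : ∀ n, P (Cset n) ≤ P (Aset n) * ENNReal.ofReal K := by
    intro n
    rw [hCdef]
    by_cases hn : (u:ℝ) ^ r ≤ (n:ℝ)
    · simp only [if_pos hn]
      rw [hAB n]
      exact mul_le_mul_right (hBn_bound n hn) _
    · simp only [if_neg hn]
      simp
  have hdisj : Pairwise (Function.onFun Disjoint Aset) := by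
    intro m n hmn
    rw [Function.onFun]
    apply Set.disjoint_left.mpr
    intro ω h1 h2
    exact hmn (by
      have hm : gwProcess ξ r ω = m := h1
      have hn : gwProcess ξ r ω = n := h2
      rw [← hm, ← hn])
  have hsumA : ∑' n, P (Aset n) ≤ 1 :=
    le_trans (le_of_eq (measure_iUnion (μ := P) hdisj hAmeasAmb).symm) prob_le_one
  have hfinal : P Eset ≤ ENNReal.ofReal K := by
    calc P Eset ≤ P (⋃ n, Cset n) := measure_mono hEsub
      _ ≤ ∑' n, P (Cset n) := measure_iUnion_le _
      _ ≤ ∑' n, P (Aset n) * ENNReal.ofReal K := ENNReal.tsum_le_tsum hCn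
      _ = (∑' n, P (Aset n)) * ENNReal.ofReal K := ENNReal.tsum_mul_right
      _ ≤ 1 * ENNReal.ofReal K := mul_le_mul_left hsumA _
      _ = ENNReal.ofReal K := one_mul _
  have hres : (P Eset).toReal ≤ K := ENNReal.toReal_le_of_le_ofReal hK0 hfinal
  calc (P Eset).toReal ≤ K := hres
    _ = 2 * (1 + κ) * (∑' t : ℕ, f t * |(t : ℝ) - μm| ^ (1 + κ)) / (μm - u) ^ (1 + κ) *
        u ^ (-(κ * r)) := by rw [hKdef, hS'def, hpdef]
end
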